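/- arXiv:math/0603080 — 14 statements merged into one kernel-verified Lean document; each statement's English description precedes it below -/
import Mathlib

section
/- Let m ≤ -1/2 and f be a solution on [0,∞) of f''' + (m+2) f f'' - (2m+1)(f')^2 = 0 with f(0) = -γ, f''(0) = -1, and f'(t) → 0 as t → ∞. Then f''(t) < 0 and f'(t) > 0 for all t ≥ 0; in particular f is strictly concave, increasing, and f(t) ≥ -γ for all t ≥ 0. -/
open Real Filter

theorem stmt_3 (m γ : ℝ) (hm : m ≤ -1/2)
    (f : ℝ → ℝ) (hf : ContDiff ℝ 3 f)
    (hode : ∀ t ≥ (0:ℝ), iteratedDeriv 3 f t + (m + 2) * f t * iteratedDeriv 2 f t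
      - (2 * m + 1) * (deriv f t) ^ 2 = 0)
    (h0 : f 0 = -γ) (h2 : iteratedDeriv 2 f 0 = -1)
    (hlim : Filter.Tendsto (deriv f) Filter.atTop (nhds 0)) :
    ∀ t ≥ (0:ℝ), iteratedDeriv 2 f t < 0 ∧ deriv f t > 0 ∧ f t ≥ -γ := by
  have hf' : ContDiff ℝ (2+1 : WithTop ℕ∞) f := by norm_num at hf ⊢; exact hf
  have hd0 : Differentiable ℝ f := (contDiff_succ_iff_deriv.mp hf').1
  have hc1 : ContDiff ℝ (1+1 : WithTop ℕ∞) (deriv f) := by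
    have := (contDiff_succ_iff_deriv.mp hf').2.2
    norm_num at this ⊢; exact this
  have hd1 : Differentiable ℝ (deriv f) := (contDiff_succ_iff_deriv.mp hc1).1
  have hc2 : ContDiff ℝ (0+1 : WithTop ℕ∞) (deriv (deriv f)) := by
    have := (contDiff_succ_iff_deriv.mp hc1).2.2
    norm_num at this ⊢; exact this
  have hd2 : Differentiable ℝ (deriv (deriv f)) := (contDiff_succ_iff_deriv.mp hc2).1
  have hi2 : iteratedDeriv 2 f = deriv (deriv f) := by
    show iteratedDeriv (1+1) f = _
    rw [iteratedDeriv_succ, iteratedDeriv_one]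
  have hi3 : iteratedDeriv 3 f = deriv (deriv (deriv f)) := by
    show iteratedDeriv (2+1) f = _
    rw [iteratedDeriv_succ, hi2]
  set F : ℝ → ℝ := fun t => ∫ x in (0:ℝ)..t, f x with hFdef
  have hFd : ∀ t, HasDerivAt F (f t) t := fun t =>
    intervalIntegral.integral_hasDerivAt_right (hf.continuous.intervalIntegrable _ _)
      (hf.continuous.stronglyMeasurableAtFilter _ _) hf.continuous.continuousAt
  set h : ℝ → ℝ := fun t => deriv (deriv f) t * Real.exp ((m+2) * F t) with hh
  have hhd : ∀ t, HasDerivAt h ((deriv (deriv (deriv f)) t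
      + (m+2) * f t * deriv (deriv f) t) * Real.exp ((m+2)*F t)) t := by
    intro t
    have h1 : HasDerivAt (fun t => deriv (deriv f) t) (deriv (deriv (deriv f)) t) t :=
      ((hd2 t).hasDerivAt)
    have h2' : HasDerivAt (fun t => Real.exp ((m+2) * F t))
        ((m+2) * f t * Real.exp ((m+2)*F t)) t := by
      have := ((hFd t).const_mul (m+2)).exp
      convert this using 1; ring
    have := h1.mul h2'
    exact this.congr_deriv (by ring)
  have hmono : AntitoneOn h (Set.Ici (0:ℝ)) := by
    apply antitoneOn_of_deriv_nonpos (convex_Ici 0)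
    · exact fun t _ => (hhd t).continuousAt.continuousWithinAt
    · exact fun t ht => ((hhd t).differentiableAt).differentiableWithinAt
    · intro t ht
      rw [interior_Ici] at ht
      rw [(hhd t).deriv]
      have hode' := hode t ht.le
      rw [hi2, hi3] at hode'
      have heq : deriv (deriv (deriv f)) t + (m+2) * f t * deriv (deriv f) t
          = (2*m+1) * (deriv f t)^2 := by linarith
      rw [heq]
      have hE := (Real.exp_pos ((m+2)*F t)).le
      have h21 : 2*m+1 ≤ 0 := by linarith
      have hsq : 0 ≤ (deriv f t)^2 * Real.exp ((m+2)*F t) :=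
        mul_nonneg (sq_nonneg _) hE
      nlinarith [mul_nonpos_of_nonpos_of_nonneg h21 hsq]
  have hF0 : F 0 = 0 := by simp [hFdef]
  have h2neg : ∀ t ≥ (0:ℝ), deriv (deriv f) t < 0 := by
    intro t ht
    have hle := hmono Set.self_mem_Ici (Set.mem_Ici.mpr ht) ht
    have h20 : deriv (deriv f) 0 = -1 := by rw [← hi2]; exact h2
    have hval : h 0 = -1 := by simp [hh, hF0, h20]
    rw [hval] at hle
    have hE := Real.exp_pos ((m+2) * F t)
    by_contra hc
    push_neg at hc
    have : (0:ℝ) ≤ deriv (deriv f) t * Real.exp ((m+2)*F t) :=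
      mul_nonneg hc hE.le
    have : h t ≥ 0 := this
    linarith
  have hanti : StrictAntiOn (deriv f) (Set.Ici (0:ℝ)) := by
    apply strictAntiOn_of_deriv_neg (convex_Ici 0) hd1.continuous.continuousOn
    intro t ht; rw [interior_Ici] at ht; exact h2neg t ht.le
  have h1nonneg : ∀ s ≥ (0:ℝ), 0 ≤ deriv f s := by
    intro s hs
    refine le_of_tendsto hlim ?_
    filter_upwards [eventually_ge_atTop s] with u hu
    rcases eq_or_lt_of_le hu with rfl | hlt
    · exact le_rfl
    · exact (hanti (Set.mem_Ici.mpr hs) (Set.mem_Ici.mpr (hs.trans hu)) hlt).le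
  have h1pos : ∀ t ≥ (0:ℝ), 0 < deriv f t := by
    intro t ht
    have := hanti (Set.mem_Ici.mpr ht) (Set.mem_Ici.mpr (by linarith : (0:ℝ) ≤ t+1))
      (by linarith)
    have h2' := h1nonneg (t+1) (by linarith)
    linarith
  have hfmono : StrictMonoOn f (Set.Ici (0:ℝ)) := by
    apply strictMonoOn_of_deriv_pos (convex_Ici 0) hd0.continuous.continuousOn
    intro t ht; rw [interior_Ici] at ht; exact h1pos t ht.le
  intro t ht
  refine ⟨by rw [hi2]; exact h2neg t ht, h1pos t ht, ?_⟩
  rcases eq_or_lt_of_le ht with rfl | hlt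
  · rw [h0]
  · rw [← h0]
    exact (hfmono Set.self_mem_Ici (Set.mem_Ici.mpr ht) hlt).le
end

section
/- Let m ≥ -1/2. Every solution f on [0,∞) of f''' + (m+2) f f'' - (2m+1)(f')^2 = 0 satisfying f''(0) = -1 and f'(t) → 0 as t → ∞ is bounded. -/
open Set Filter Real

/-- Monotone on `Ici a` from nonneg derivative. -/
lemma aux_mono_Ici {g g' : ℝ → ℝ} (hg : ∀ t, HasDerivAt g (g' t) t) {a : ℝ}
    (h : ∀ t ≥ a, 0 ≤ g' t) : MonotoneOn g (Set.Ici a) := by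
  have hd : Differentiable ℝ g := fun t => (hg t).differentiableAt
  apply monotoneOn_of_deriv_nonneg (convex_Ici a) hd.continuous.continuousOn
    (hd.differentiableOn.mono interior_subset)
  intro x hx
  rw [(hg x).deriv]
  exact h x (le_of_lt (by simpa [interior_Ici] using hx))

/-- Antitone on `Ici a` from nonpos derivative. -/
lemma aux_anti_Ici {g g' : ℝ → ℝ} (hg : ∀ t, HasDerivAt g (g' t) t) {a : ℝ}
    (h : ∀ t ≥ a, g' t ≤ 0) : AntitoneOn g (Set.Ici a) := by
  have hd : Differentiable ℝ g := fun t => (hg t).differentiableAt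
  apply antitoneOn_of_deriv_nonpos (convex_Ici a) hd.continuous.continuousOn
    (hd.differentiableOn.mono interior_subset)
  intro x hx
  rw [(hg x).deriv]
  exact h x (le_of_lt (by simpa [interior_Ici] using hx))

/-- A function monotone on `Ici a` tending to `0` at `atTop` is nonpositive on `Ici a`. -/
lemma aux_nonpos_of_mono {g : ℝ → ℝ} {a : ℝ} (hmono : MonotoneOn g (Set.Ici a))
    (hlim : Filter.Tendsto g Filter.atTop (nhds 0)) : ∀ t ≥ a, g t ≤ 0 := by
  intro t ht
  refine ge_of_tendsto hlim ?_
  filter_upwards [eventually_ge_atTop t] with x hx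
  exact hmono ht (le_trans ht hx) hx

/-- A function antitone on `Ici a` tending to `0` at `atTop` is nonnegative on `Ici a`. -/
lemma aux_nonneg_of_anti {g : ℝ → ℝ} {a : ℝ} (hanti : AntitoneOn g (Set.Ici a))
    (hlim : Filter.Tendsto g Filter.atTop (nhds 0)) : ∀ t ≥ a, 0 ≤ g t := by
  intro t ht
  refine le_of_tendsto hlim ?_
  filter_upwards [eventually_ge_atTop t] with x hx
  exact hanti ht (le_trans ht hx) hx

theorem stmt_5 (m : ℝ) (hm : m ≥ -1/2)
    (f : ℝ → ℝ) (hf : ContDiff ℝ 3 f)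
    (hode : ∀ t ≥ (0:ℝ), iteratedDeriv 3 f t + (m + 2) * f t * iteratedDeriv 2 f t
      - (2 * m + 1) * (deriv f t) ^ 2 = 0)
    (h2 : iteratedDeriv 2 f 0 = -1)
    (hlim : Filter.Tendsto (deriv f) Filter.atTop (nhds 0)) :
    ∃ C : ℝ, ∀ t ≥ (0:ℝ), |f t| ≤ C := by
  have h21 : (0:ℝ) ≤ 2 * m + 1 := by linarith
  set k : ℝ := m + 2 with hk_def
  have hk : 0 < k := by simp only [hk_def]; linarith
  -- smoothness bookkeeping
  have hf3 : ContDiff ℝ (2 + 1 : ℕ) f := by exact_mod_cast hf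
  have hdf : Differentiable ℝ f := hf3.differentiable (by norm_num)
  have hcf : Continuous f := hdf.continuous
  set f1 : ℝ → ℝ := deriv f with hf1_def
  have hf2c : ContDiff ℝ (1 + 1 : ℕ) f1 := by
    exact_mod_cast (contDiff_succ_iff_deriv.mp hf3).2.2
  have hdf1 : Differentiable ℝ f1 := hf2c.differentiable (by norm_num)
  set f2 : ℝ → ℝ := deriv f1 with hf2_def
  have hf1c : ContDiff ℝ (0 + 1 : ℕ) f2 := by
    exact_mod_cast (contDiff_succ_iff_deriv.mp hf2c).2.2
  have hdf2 : Differentiable ℝ f2 := hf1c.differentiable (by norm_num)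
  have hD : ∀ t, HasDerivAt f (f1 t) t := fun t => (hdf t).hasDerivAt
  have hD1 : ∀ t, HasDerivAt f1 (f2 t) t := fun t => (hdf1 t).hasDerivAt
  -- rewrite iterated derivatives
  have hiter2 : iteratedDeriv 2 f = f2 := by
    rw [show (2:ℕ) = 1 + 1 from rfl, iteratedDeriv_succ, iteratedDeriv_one]
  have hiter3 : iteratedDeriv 3 f = deriv f2 := by
    rw [show (3:ℕ) = 2 + 1 from rfl, iteratedDeriv_succ, hiter2]
  have hode' : ∀ t ≥ (0:ℝ), deriv f2 t = (2 * m + 1) * (f1 t) ^ 2 - k * f t * f2 t := by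
    intro t ht
    have h := hode t ht
    rw [hiter2, hiter3] at h
    linarith
  have h20 : f2 0 = -1 := by rw [← hiter2]; exact h2
  -- the antiderivative F of f
  set F : ℝ → ℝ := fun t => ∫ s in (0:ℝ)..t, f s with hF_def
  have hF : ∀ t, HasDerivAt F (f t) t := fun t =>
    intervalIntegral.integral_hasDerivAt_right (hcf.intervalIntegrable _ _)
      hcf.aestronglyMeasurable.stronglyMeasurableAtFilter hcf.continuousAt
  have hF0 : F 0 = 0 := intervalIntegral.integral_same
  -- the auxiliary function J
  set J : ℝ → ℝ := fun t => f2 t * Real.exp (k * F t) with hJ_def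
  have hJ : ∀ t, HasDerivAt J ((deriv f2 t + k * f t * f2 t) * Real.exp (k * F t)) t := by
    intro t
    have h1 : HasDerivAt f2 (deriv f2 t) t := (hdf2 t).hasDerivAt
    have h2' : HasDerivAt (fun t => Real.exp (k * F t)) (Real.exp (k * F t) * (k * f t)) t :=
      ((hF t).const_mul k).exp
    have := h1.mul h2'
    exact this.congr_deriv (by ring)
  have hJmono : MonotoneOn J (Set.Ici (0:ℝ)) := by
    apply aux_mono_Ici hJ
    intro t ht
    have heq : (deriv f2 t + k * f t * f2 t) * Real.exp (k * F t)
        = (2 * m + 1) * f1 t ^ 2 * Real.exp (k * F t) := by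
      rw [hode' t ht]; ring
    rw [heq]
    exact mul_nonneg (mul_nonneg h21 (sq_nonneg _)) (Real.exp_pos _).le
  have hJ0 : J 0 = -1 := by simp [hJ_def, hF0, h20]
  -- lower bound for f2 coming from monotonicity of J
  have hf2lb : ∀ t ≥ (0:ℝ), -Real.exp (-(k * F t)) ≤ f2 t := by
    intro t ht
    have h1 : (-1:ℝ) ≤ f2 t * Real.exp (k * F t) := by
      rw [← hJ0]; exact hJmono (Set.mem_Ici.mpr (le_refl 0)) ht ht
    have h3 : f2 t * Real.exp (k * F t) * Real.exp (-(k * F t)) = f2 t := by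
      rw [mul_assoc, ← Real.exp_add]; simp
    have h4 := mul_le_mul_of_nonneg_right h1 (Real.exp_pos (-(k * F t))).le
    linarith
  -- main dichotomy
  by_cases hA : ∃ t₀ ≥ (0:ℝ), 0 ≤ f2 t₀
  · -- Case B : f'' eventually nonnegative, f eventually nonincreasing
    obtain ⟨t₀, ht₀, hf2t₀⟩ := hA
    have hJt₀ : 0 ≤ J t₀ := mul_nonneg hf2t₀ (Real.exp_pos _).le
    have hf2pos : ∀ t ≥ t₀, 0 ≤ f2 t := by
      intro t ht
      have h1 : J t₀ ≤ J t := hJmono ht₀ (le_trans ht₀ ht) ht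
      have hJt : 0 ≤ f2 t * Real.exp (k * F t) := le_trans hJt₀ h1
      exact nonneg_of_mul_nonneg_right
        (by linarith [mul_comm (f2 t) (Real.exp (k * F t))]) (Real.exp_pos _)
    have hf1mono : MonotoneOn f1 (Set.Ici t₀) := aux_mono_Ici hD1 hf2pos
    have hf1nonpos : ∀ t ≥ t₀, f1 t ≤ 0 := aux_nonpos_of_mono hf1mono hlim
    have hfanti : AntitoneOn f (Set.Ici t₀) := aux_anti_Ici hD hf1nonpos
    -- upper bound
    obtain ⟨xM, hxM, hxM2⟩ := isCompact_Icc.exists_isMaxOn (α := ℝ) (s := Icc 0 t₀)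
      (nonempty_Icc.mpr ht₀) hcf.continuousOn
    have hub : ∀ t ≥ (0:ℝ), f t ≤ f xM := by
      intro t ht
      rcases le_total t t₀ with h | h
      · exact hxM2 ⟨ht, h⟩
      · have ha : f t ≤ f t₀ := hfanti (le_refl t₀) h h
        have hb : f t₀ ≤ f xM := hxM2 ⟨ht₀, le_refl t₀⟩
        linarith
    -- lower bound, by contradiction
    have hlb : ∃ Cl : ℝ, ∀ t ≥ (0:ℝ), Cl ≤ f t := by
      by_contra hlb
      push_neg at hlb
      obtain ⟨xm, hxm, hxm2⟩ := isCompact_Icc.exists_isMinOn (α := ℝ) (s := Icc 0 t₀)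
        (nonempty_Icc.mpr ht₀) hcf.continuousOn
      -- T with f T < min (-1) (f xm)
      obtain ⟨T, hT0, hT⟩ := hlb (min (-1) (f xm))
      have hTgt : t₀ < T := by
        by_contra h
        push_neg at h
        have h1 : f xm ≤ f T := hxm2 ⟨hT0, h⟩
        have h2 : f T < f xm := lt_of_lt_of_le hT (min_le_right _ _)
        linarith
      have hfT : f T < -1 := lt_of_lt_of_le hT (min_le_left _ _)
      have hfle : ∀ t ≥ T, f t ≤ -1 := fun t ht =>
        le_trans (hfanti hTgt.le (le_trans hTgt.le ht) ht) hfT.le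
      -- t₂ with f t₂ < f T - 1, necessarily t₂ > T
      obtain ⟨t₂, ht₂0, ht₂⟩ := hlb (min (f T - 1) (f xm))
      have ht₂T : T < t₂ := by
        by_contra h
        push_neg at h
        rcases le_total t₂ t₀ with h' | h'
        · have h1 : f xm ≤ f t₂ := hxm2 ⟨ht₂0, h'⟩
          have h2 : f t₂ < f xm := lt_of_lt_of_le ht₂ (min_le_right _ _)
          linarith
        · have h1 : f T ≤ f t₂ := hfanti h' (le_trans h' h) h
          have h2 : f t₂ < f T - 1 := lt_of_lt_of_le ht₂ (min_le_left _ _)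
          linarith
      have ht₂f : f t₂ < f T := by
        have := lt_of_lt_of_le ht₂ (min_le_left _ _); linarith
      -- MVT: a point s in (T, t₂) where f1 < 0
      obtain ⟨s, hs, hs2⟩ := exists_hasDerivAt_eq_slope f f1 ht₂T
        hcf.continuousOn (fun x _ => hD x)
      have hf1s : f1 s < 0 := by
        rw [hs2]
        apply div_neg_of_neg_of_pos <;> linarith
      -- a point t₃ > s with f1 t₃ > f1 s
      have hev : ∀ᶠ x in atTop, f1 s / 2 < f1 x := by
        apply hlim.eventually
        exact eventually_gt_nhds (by linarith)
      obtain ⟨t₃, ht₃a, ht₃b⟩ := ((eventually_ge_atTop (s + 1)).and hev).exists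
      have hst₃ : s < t₃ := by linarith
      -- MVT: a point c in (s, t₃) where f2 > 0
      obtain ⟨c, hc, hc2⟩ := exists_hasDerivAt_eq_slope f1 f2 hst₃
        hdf1.continuous.continuousOn (fun x _ => hD1 x)
      have hf2cpos : 0 < f2 c := by
        rw [hc2]
        apply div_pos <;> linarith
      have hcT : T < c := lt_trans hs.1 hc.1
      have hct₀ : t₀ ≤ c := le_trans hTgt.le hcT.le
      have hc0 : (0:ℝ) ≤ c := le_trans ht₀ hct₀
      -- F is nonincreasing beyond c : F t ≤ F c for t ≥ c
      have hFanti : AntitoneOn F (Set.Ici c) := by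
        apply aux_anti_Ici hF
        intro t ht
        have := hfle t (le_trans hcT.le ht)
        linarith
      -- J c > 0, hence f2 t ≥ ε > 0 for t ≥ c
      set ε : ℝ := f2 c * Real.exp (k * F c) * Real.exp (-(k * F c)) with hε_def
      have hεpos : 0 < ε := by positivity
      have hf2ge : ∀ t ≥ c, ε ≤ f2 t := by
        intro t ht
        have hJc : f2 c * Real.exp (k * F c) ≤ f2 t * Real.exp (k * F t) :=
          hJmono (le_trans ht₀ hct₀) (le_trans hc0 ht) ht
        have hFt : F t ≤ F c := hFanti (le_refl c) ht ht
        have hexp : Real.exp (-(k * F c)) ≤ Real.exp (-(k * F t)) := by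
          apply Real.exp_le_exp.mpr
          nlinarith
        have h1 : f2 c * Real.exp (k * F c) * Real.exp (-(k * F t))
            ≤ f2 t * Real.exp (k * F t) * Real.exp (-(k * F t)) :=
          mul_le_mul_of_nonneg_right hJc (Real.exp_pos _).le
        have h2 : f2 t * Real.exp (k * F t) * Real.exp (-(k * F t)) = f2 t := by
          rw [mul_assoc, ← Real.exp_add]; simp
        have h3 : ε ≤ f2 c * Real.exp (k * F c) * Real.exp (-(k * F t)) := by
          rw [hε_def]
          apply mul_le_mul_of_nonneg_left hexp
          positivity
        linarith
      -- then f1 grows linearly, contradiction with f1 ≤ 0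
      have hχd : ∀ t, HasDerivAt (fun t => f1 t - ε * t) (f2 t - ε) t := by
        intro t
        exact ((hD1 t).sub ((hasDerivAt_id t).const_mul ε)).congr_deriv (by ring)
      have hχ : MonotoneOn (fun t => f1 t - ε * t) (Set.Ici c) := by
        apply aux_mono_Ici hχd
        intro t ht
        have := hf2ge t ht
        linarith
      set tbig : ℝ := c + (1 - f1 c) / ε with htbig_def
      have hf1c0 : f1 c ≤ 0 := hf1nonpos c hct₀
      have htbigc : c ≤ tbig := by
        rw [htbig_def]
        have : 0 ≤ (1 - f1 c) / ε := div_nonneg (by linarith) hεpos.le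
        linarith
      have hmono2 := hχ (le_refl c) htbigc htbigc
      have hεt : ε * tbig = ε * c + (1 - f1 c) := by
        rw [htbig_def]
        field_simp [hεpos.ne']
      have hf1big : 1 ≤ f1 tbig := by
        simp only at hmono2
        linarith
      have := hf1nonpos tbig (le_trans hct₀ htbigc)
      linarith
    obtain ⟨Cl, hCl⟩ := hlb
    refine ⟨max (f xM) (-Cl), fun t ht => abs_le.mpr ⟨?_, ?_⟩⟩
    · have h1 := hCl t ht
      have h2 := le_max_right (f xM) (-Cl)
      linarith
    · exact le_trans (hub t ht) (le_max_left _ _)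
  · -- Case A : f'' < 0 everywhere, f' ≥ 0, f increasing
    push_neg at hA
    have hf1anti : AntitoneOn f1 (Set.Ici (0:ℝ)) :=
      aux_anti_Ici hD1 (fun t ht => (hA t ht).le)
    have hf1nonneg : ∀ t ≥ (0:ℝ), 0 ≤ f1 t := aux_nonneg_of_anti hf1anti hlim
    have hfmono : MonotoneOn f (Set.Ici (0:ℝ)) := aux_mono_Ici hD hf1nonneg
    have hub : ∃ B : ℝ, ∀ t ≥ (0:ℝ), f t ≤ B := by
      by_contra hub
      push_neg at hub
      obtain ⟨T, hT0, hT1⟩ := hub 1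
      have hfge1 : ∀ t ≥ T, 1 ≤ f t := fun t ht =>
        le_trans hT1.le (hfmono hT0 (le_trans hT0 ht) ht)
      -- F grows at least linearly beyond T
      have hFgrow : ∀ t ≥ T, F T + (t - T) ≤ F t := by
        have hφd : ∀ t, HasDerivAt (fun t => F t - t) (f t - 1) t := fun t =>
          (hF t).sub (hasDerivAt_id t)
        have hφ : MonotoneOn (fun t => F t - t) (Set.Ici T) := by
          apply aux_mono_Ici hφd
          intro t ht
          have := hfge1 t ht
          linarith
        intro t ht
        have := hφ (le_refl T) ht ht
        simp only at this
        linarith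
      set C : ℝ := Real.exp (-(k * F T)) with hC_def
      have hCpos : 0 < C := Real.exp_pos _
      -- the exponential comparison function
      have hexpd : ∀ t : ℝ, HasDerivAt (fun t => Real.exp (-(k * (t - T))))
          (-k * Real.exp (-(k * (t - T)))) t := by
        intro t
        have h0 : HasDerivAt (fun t : ℝ => t - T) 1 t := (hasDerivAt_id t).sub_const T
        have h1 : HasDerivAt (fun t : ℝ => -(k * (t - T))) (-k) t := by
          exact ((h0.const_mul k).neg).congr_deriv (by ring)
        simpa [mul_comm] using h1.exp
      -- f2 t ≥ -(C * exp (-(k * (t - T)))) for t ≥ T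
      have hf2lb' : ∀ t ≥ T, -(C * Real.exp (-(k * (t - T)))) ≤ f2 t := by
        intro t ht
        have h1 := hf2lb t (le_trans hT0 ht)
        have h2 : Real.exp (-(k * F t)) ≤ C * Real.exp (-(k * (t - T))) := by
          rw [hC_def, ← Real.exp_add]
          apply Real.exp_le_exp.mpr
          have := hFgrow t ht
          nlinarith
        linarith
      -- hence f1 t ≤ (C / k) * exp (-(k * (t - T))) for t ≥ T
      have hφ1d : ∀ t, HasDerivAt (fun t => f1 t - C / k * Real.exp (-(k * (t - T))))
          (f2 t + C * Real.exp (-(k * (t - T)))) t := by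
        intro t
        have := (hD1 t).sub ((hexpd t).const_mul (C / k))
        exact this.congr_deriv (by field_simp; ring)
      have hφ1mono : MonotoneOn (fun t => f1 t - C / k * Real.exp (-(k * (t - T))))
          (Set.Ici T) := by
        apply aux_mono_Ici hφ1d
        intro t ht
        have h1 := hf2lb' t ht
        have h2 : (0:ℝ) < C * Real.exp (-(k * (t - T))) := by positivity
        linarith
      have hexplim : Tendsto (fun t => C / k * Real.exp (-(k * (t - T)))) atTop (nhds 0) := by
        rw [show (0:ℝ) = C / k * 0 by ring]
        apply Tendsto.const_mul
        apply Real.tendsto_exp_atBot.comp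
        apply tendsto_neg_atBot_iff.mpr
        apply Tendsto.const_mul_atTop hk
        exact tendsto_atTop_add_const_right _ _ tendsto_id
      have hφ1lim : Tendsto (fun t => f1 t - C / k * Real.exp (-(k * (t - T)))) atTop (nhds 0) := by
        rw [show (0:ℝ) = 0 - 0 by ring]
        exact hlim.sub hexplim
      have hf1ub : ∀ t ≥ T, f1 t ≤ C / k * Real.exp (-(k * (t - T))) := by
        intro t ht
        have := aux_nonpos_of_mono hφ1mono hφ1lim t ht
        linarith
      -- hence f t ≤ f T + C / k ^ 2 for t ≥ T
      have hφ2d : ∀ t, HasDerivAt (fun t => f t + C / k ^ 2 * Real.exp (-(k * (t - T))))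
          (f1 t - C / k * Real.exp (-(k * (t - T)))) t := by
        intro t
        have := (hD t).add ((hexpd t).const_mul (C / k ^ 2))
        exact this.congr_deriv (by field_simp; ring)
      have hφ2anti : AntitoneOn (fun t => f t + C / k ^ 2 * Real.exp (-(k * (t - T))))
          (Set.Ici T) := by
        apply aux_anti_Ici hφ2d
        intro t ht
        have := hf1ub t ht
        linarith
      have hfub : ∀ t ≥ T, f t ≤ f T + C / k ^ 2 := by
        intro t ht
        have h1 := hφ2anti (le_refl T) ht ht
        simp only [sub_self, mul_zero, neg_zero, Real.exp_zero, mul_one] at h1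
        have h2 : 0 ≤ C / k ^ 2 * Real.exp (-(k * (t - T))) := by positivity
        linarith
      obtain ⟨t', ht'0, ht'⟩ := hub (f T + C / k ^ 2 + 1)
      rcases le_total t' T with h | h
      · have := hfmono ht'0 hT0 h
        have h2 : 0 ≤ C / k ^ 2 := by positivity
        linarith
      · have := hfub t' h
        linarith
    obtain ⟨B, hB⟩ := hub
    refine ⟨max B (-(f 0)), fun t ht => abs_le.mpr ⟨?_, le_trans (hB t ht) (le_max_left _ _)⟩⟩
    have h1 : f 0 ≤ f t := hfmono (Set.mem_Ici.mpr (le_refl 0)) ht ht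
    have h2 := le_max_right B (-(f 0))
    linarith
end

section
/- If f solves f''' + (m+2) f f'' - (2m+1)(f')^2 = 0 on [ρ, r], then f(r)f''(r) - f(ρ)f''(ρ) - (1/2)(f'(r)² - f'(ρ)²) + (m+2)(f(r)² f'(r) - f(ρ)² f'(ρ)) = (4m+5) ∫_ρ^r f(ξ) f'(ξ)² dξ. -/
theorem stmt_7 (m ρ r : ℝ) (hρr : ρ ≤ r)
    (f : ℝ → ℝ) (hf : ContDiff ℝ 3 f)
    (hode : ∀ t ∈ Set.Icc ρ r, iteratedDeriv 3 f t + (m + 2) * f t * iteratedDeriv 2 f t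
      - (2 * m + 1) * (deriv f t) ^ 2 = 0) :
    f r * iteratedDeriv 2 f r - f ρ * iteratedDeriv 2 f ρ
      - (1/2) * ((deriv f r) ^ 2 - (deriv f ρ) ^ 2)
      + (m + 2) * (f r ^ 2 * deriv f r - f ρ ^ 2 * deriv f ρ)
      = (4 * m + 5) * ∫ ξ in ρ..r, f ξ * (deriv f ξ) ^ 2 := by
  have hf' : ContDiff ℝ 2 (deriv f) :=
    (contDiff_succ_iff_deriv.mp (show ContDiff ℝ (2+1) f by norm_num; exact hf)).2.2
  have hf'' : ContDiff ℝ 1 (deriv (deriv f)) :=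
    (contDiff_succ_iff_deriv.mp (show ContDiff ℝ (1+1) (deriv f) by norm_num; exact hf')).2.2
  have h2 : iteratedDeriv 2 f = deriv (deriv f) := by
    rw [iteratedDeriv_succ, iteratedDeriv_one]
  have h3 : iteratedDeriv 3 f = deriv (deriv (deriv f)) := by
    rw [iteratedDeriv_succ, h2]
  have hd0 : ∀ t, HasDerivAt f (deriv f t) t := fun t =>
    (hf.differentiable (by norm_num) t).hasDerivAt
  have hd1 : ∀ t, HasDerivAt (deriv f) (deriv (deriv f) t) t := fun t =>
    (hf'.differentiable (by norm_num) t).hasDerivAt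
  have hd2 : ∀ t, HasDerivAt (deriv (deriv f)) (deriv (deriv (deriv f)) t) t := fun t =>
    (hf''.differentiable (by norm_num) t).hasDerivAt
  set F : ℝ → ℝ := fun t => f t * deriv (deriv f) t - (1/2) * (deriv f t) ^ 2
      + (m + 2) * (f t ^ 2 * deriv f t) with hF
  have key : ∀ t ∈ Set.uIcc ρ r, HasDerivAt F ((4 * m + 5) * (f t * (deriv f t) ^ 2)) t := by
    intro t ht
    rw [Set.uIcc_of_le hρr] at ht
    have hODE := hode t ht
    rw [h3, h2] at hODE
    exact ((((hd0 t).mul (hd2 t)).sub (((hd1 t).pow 2).const_mul (1/2:ℝ))).add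
        ((((hd0 t).pow 2).mul (hd1 t)).const_mul (m+2))).congr_deriv
      (by push_cast; simp only [Pi.pow_apply]; linear_combination f t * hODE)
  have hcont : Continuous fun t => (4 * m + 5) * (f t * (deriv f t) ^ 2) := by
    have := hf.continuous
    have := (hf'.continuous)
    fun_prop
  have hint := intervalIntegral.integral_eq_sub_of_hasDerivAt key
    (hcont.intervalIntegrable ρ r)
  rw [h2, ← intervalIntegral.integral_const_mul, hint]
  simp only [hF]
  ring
end

section
/- Let f be a positive C³ solution of f''' + (m+2) f f'' - (2m+1)(f')^2 = 0 on an interval around τ. Define s(t) = ∫_τ^t f(ξ)dξ, u(s(t)) = f'(t)/f(t)², v(s(t)) = f''(t)/f(t)³. Then u and v satisfy the plane autonomous system u̇ = v - 2u², v̇ = -(m+2)v + (2m+1)u² - 3uv. -/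
/-- The blowing-up coordinates `u = f'/f²`, `v = f''/f³`, as functions of
`s(t) = ∫_τ^t f`, satisfy `u̇ = v - 2u²`, `v̇ = -(m+2)v + (2m+1)u² - 3uv`.
Since `ds/dt = f(t) > 0`, this is equivalent to the chain-rule form
`dU/dt = f·(V - 2U²)`, `dV/dt = f·(-(m+2)V + (2m+1)U² - 3UV)` where
`U(t) = u(s(t))`, `V(t) = v(s(t))`. -/
theorem stmt_8 (m : ℝ) (I : Set ℝ) (hIopen : IsOpen I) (hI : I.OrdConnected)
    (τ : ℝ) (hτ : τ ∈ I)
    (f : ℝ → ℝ) (hf : ContDiffOn ℝ 3 f I) (hfpos : ∀ t ∈ I, 0 < f t)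
    (hode : ∀ t ∈ I, iteratedDeriv 3 f t + (m + 2) * f t * iteratedDeriv 2 f t
      - (2 * m + 1) * (deriv f t) ^ 2 = 0)
    (U V : ℝ → ℝ)
    (hU : ∀ t ∈ I, U t = deriv f t / (f t) ^ 2)
    (hV : ∀ t ∈ I, V t = iteratedDeriv 2 f t / (f t) ^ 3) :
    ∀ t ∈ I,
      HasDerivAt U (f t * (V t - 2 * (U t) ^ 2)) t ∧
      HasDerivAt V (f t * (-(m + 2) * V t + (2 * m + 1) * (U t) ^ 2 - 3 * U t * V t)) t := by
  -- regularity of the successive derivatives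
  have hf' : ContDiffOn ℝ 2 (deriv f) I := by
    have := (contDiffOn_succ_iff_deriv_of_isOpen (n := 2) hIopen).mp
      (by exact_mod_cast hf)
    exact this.2.2
  have hf'' : ContDiffOn ℝ 1 (deriv (deriv f)) I := by
    have := (contDiffOn_succ_iff_deriv_of_isOpen (n := 1) hIopen).mp
      (by exact_mod_cast hf')
    exact this.2.2
  have hd2 : iteratedDeriv 2 f = deriv (deriv f) := by
    rw [iteratedDeriv_succ, iteratedDeriv_one]
  have hd3 : iteratedDeriv 3 f = deriv (deriv (deriv f)) := by
    rw [iteratedDeriv_succ, hd2]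
  intro t ht
  have hmem := hIopen.mem_nhds ht
  have hfne : f t ≠ 0 := (hfpos t ht).ne'
  -- pointwise derivatives
  have h1 : HasDerivAt f (deriv f t) t :=
    ((hf.differentiableOn (by norm_num)).differentiableAt hmem).hasDerivAt
  have h2 : HasDerivAt (deriv f) (iteratedDeriv 2 f t) t := by
    rw [hd2]
    exact ((hf'.differentiableOn (by norm_num)).differentiableAt hmem).hasDerivAt
  have h3 : HasDerivAt (iteratedDeriv 2 f) (iteratedDeriv 3 f t) t := by
    rw [hd2, hd3]
    exact ((hf''.differentiableOn (by norm_num)).differentiableAt hmem).hasDerivAt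
  have hodet : iteratedDeriv 3 f t
      = (2 * m + 1) * (deriv f t) ^ 2 - (m + 2) * f t * iteratedDeriv 2 f t := by
    linarith [hode t ht]
  have hUeq : U =ᶠ[nhds t] fun x => deriv f x / (f x) ^ 2 := by
    filter_upwards [hIopen.mem_nhds ht] with x hx using hU x hx
  have hVeq : V =ᶠ[nhds t] fun x => iteratedDeriv 2 f x / (f x) ^ 3 := by
    filter_upwards [hIopen.mem_nhds ht] with x hx using hV x hx
  constructor
  · have hdU : HasDerivAt (fun x => deriv f x / (f x) ^ 2)
        ((iteratedDeriv 2 f t * (f t) ^ 2 - deriv f t * (2 * f t ^ 1 * deriv f t))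
          / ((f t) ^ 2) ^ 2) t :=
      h2.div (h1.pow 2) (pow_ne_zero 2 hfne)
    have := hdU.congr_of_eventuallyEq hUeq
    refine this.congr_deriv ?_
    rw [hU t ht, hV t ht]
    field_simp
  · have hdV : HasDerivAt (fun x => iteratedDeriv 2 f x / (f x) ^ 3)
        ((iteratedDeriv 3 f t * (f t) ^ 3 - iteratedDeriv 2 f t * (3 * f t ^ 2 * deriv f t))
          / ((f t) ^ 3) ^ 2) t :=
      h3.div (h1.pow 3) (pow_ne_zero 3 hfne)
    have := hdV.congr_of_eventuallyEq hVeq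
    refine this.congr_deriv ?_
    rw [hU t ht, hV t ht, hodet]
    field_simp
    ring
end

section
/- Let m ≤ -2 and γ ≤ (2/(m+2)²)^{1/3} (with the convention that for m = -2 there is no constraint, i.e. for m = -2 take any γ). Then the problem f''' + (m+2) f f'' - (2m+1)(f')^2 = 0 on [0,∞), f(0) = -γ, f''(0) = -1, f'(∞) = 0 has no solution. In particular for m = -2 there is no solution for any γ ∈ ℝ. -/
open Set Filter Real

set_option maxHeartbeats 2000000 in
theorem stmt_9 (m γ : ℝ) (hm : m ≤ -2)
    (hγ : m = -2 ∨ γ ≤ (2 / (m + 2) ^ 2) ^ ((1:ℝ)/3)) :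
    ¬ ∃ f : ℝ → ℝ, ContDiff ℝ 3 f ∧
      (∀ t ≥ (0:ℝ), iteratedDeriv 3 f t + (m + 2) * f t * iteratedDeriv 2 f t
        - (2 * m + 1) * (deriv f t) ^ 2 = 0) ∧
      f 0 = -γ ∧ iteratedDeriv 2 f 0 = -1 ∧
      Filter.Tendsto (deriv f) Filter.atTop (nhds 0) := by
  rintro ⟨f, hf, hode, hf0, hf20, hlim⟩
  set α := m + 2 with hα
  -- differentiability bookkeeping
  have h3 : ContDiff ℝ ((2:ℕ) + 1) f := by exact_mod_cast hf
  rw [contDiff_succ_iff_deriv] at h3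
  obtain ⟨hd0, -, h2'⟩ := h3
  have h2 : ContDiff ℝ ((1:ℕ) + 1) (deriv f) := by exact_mod_cast h2'
  rw [contDiff_succ_iff_deriv] at h2
  obtain ⟨hd1, -, h1'⟩ := h2
  have h1 : ContDiff ℝ (1 : WithTop ℕ∞) (deriv (deriv f)) := by exact_mod_cast h1'
  rw [contDiff_one_iff_deriv] at h1
  obtain ⟨hd2, hc3⟩ := h1
  set f1 := deriv f with hf1def
  set f2 := deriv f1 with hf2def
  set f3 := deriv f2 with hf3def
  have e2 : iteratedDeriv 2 f = f2 := by
    rw [iteratedDeriv_succ, iteratedDeriv_one]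
  have e3 : iteratedDeriv 3 f = f3 := by
    rw [iteratedDeriv_succ, e2]
  rw [e2] at hf20
  rw [e3] at hode
  simp only [e2] at hode
  -- F = primitive of f
  set F : ℝ → ℝ := fun t => ∫ s in (0:ℝ)..t, f s with hFdef
  have hF : ∀ t, HasDerivAt F (f t) t := fun t =>
    (hd0.continuous.integral_hasStrictDerivAt 0 t).hasDerivAt
  have hF0 : F 0 = 0 := intervalIntegral.integral_same
  have hFcont : Continuous F := by
    rw [continuous_iff_continuousAt]; exact fun t => (hF t).continuousAt
  -- g = f'' * exp (α F) is antitone on [0, ∞)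
  set g : ℝ → ℝ := fun t => f2 t * Real.exp (α * F t) with hgdef
  have hgd : ∀ t, HasDerivAt g ((f3 t + α * f t * f2 t) * Real.exp (α * F t)) t := by
    intro t
    have h1 : HasDerivAt (fun u => Real.exp (α * F u))
        (Real.exp (α * F t) * (α * f t)) t := ((hF t).const_mul α).exp
    have h2 : HasDerivAt f2 (f3 t) t := (hd2 t).hasDerivAt
    have := h2.fun_mul h1
    exact this.congr_deriv (by ring)
  have hganti : AntitoneOn g (Ici (0:ℝ)) := by
    apply antitoneOn_of_deriv_nonpos (convex_Ici 0)
    · exact (hd2.continuous.mul ((continuous_const.mul hFcont).rexp)).continuousOn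
    · intro x hx
      exact (hgd x).differentiableAt.differentiableWithinAt
    · intro x hx
      rw [interior_Ici] at hx
      rw [(hgd x).deriv]
      have hode' := hode x hx.le
      have hexp := (Real.exp_pos (α * F x)).le
      nlinarith [mul_nonneg (sq_nonneg (f1 x)) hexp,
        mul_nonneg (mul_nonneg (show (0:ℝ) ≤ -(2*m+1) by linarith) (sq_nonneg (f1 x))) hexp]
  have hg0 : g 0 = -1 := by
    simp only [hgdef, hF0, mul_zero, Real.exp_zero, hf20, mul_one]
  have hgle : ∀ t, 0 ≤ t → g t ≤ -1 := by
    intro t ht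
    have := hganti (self_mem_Ici) (show t ∈ Ici (0:ℝ) from ht) ht
    rwa [hg0] at this
  have hf2le : ∀ t, 0 ≤ t → f2 t ≤ -Real.exp (-(α * F t)) := by
    intro t ht
    have h1 := hgle t ht
    have h2 := Real.exp_pos (α * F t)
    have h3 : Real.exp (-(α * F t)) * Real.exp (α * F t) = 1 := by
      rw [← Real.exp_add]; simp
    simp only [hgdef] at h1
    nlinarith
  have hf2neg : ∀ t, 0 ≤ t → f2 t < 0 := fun t ht =>
    lt_of_le_of_lt (hf2le t ht) (neg_lt_zero.2 (Real.exp_pos _))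
  -- f1 strictly antitone, nonneg, positive
  have hf1anti : StrictAntiOn f1 (Ici (0:ℝ)) := by
    apply strictAntiOn_of_deriv_neg (convex_Ici 0) hd1.continuous.continuousOn
    intro x hx
    rw [interior_Ici] at hx
    exact hf2neg x hx.le
  have hf1nonneg : ∀ t, 0 ≤ t → 0 ≤ f1 t := by
    intro t ht
    have hev : ∀ᶠ s in atTop, f1 s ≤ f1 t := by
      filter_upwards [eventually_ge_atTop t] with s hs
      rcases eq_or_lt_of_le hs with rfl | hlt
      · exact le_rfl
      · exact (hf1anti ht (ht.trans hs) hlt).le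
    exact le_of_tendsto hlim hev
  have hf1pos : ∀ t, 0 ≤ t → 0 < f1 t := by
    intro t ht
    have h1 : f1 (t+1) < f1 t := hf1anti ht (by simp; linarith) (lt_add_one t)
    have h2 : 0 ≤ f1 (t+1) := hf1nonneg (t+1) (by linarith)
    linarith
  -- contradiction machine from "f'' ≤ -1 eventually"
  have hlin : ∀ T, 0 ≤ T → (∀ s, T ≤ s → f2 s ≤ -1) → False := by
    intro T hT hbd
    have hanti : AntitoneOn (fun s => f1 s + s) (Ici T) := by
      apply antitoneOn_of_deriv_nonpos (convex_Ici T)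
      · exact (hd1.continuous.add continuous_id).continuousOn
      · intro x _
        exact ((hd1 x).add differentiableAt_id).differentiableWithinAt
      · intro x hx
        rw [interior_Ici] at hx
        have hx2 : HasDerivAt (fun s => f1 s + s) (f2 x + 1) x :=
          (hd1 x).hasDerivAt.add (hasDerivAt_id x)
        rw [hx2.deriv]
        have := hbd x hx.le
        linarith
    have hfT := hf1pos T hT
    have ht : T ≤ T + f1 T + 1 := by linarith
    have hkey := hanti (self_mem_Ici) (show T + f1 T + 1 ∈ Ici T from ht) ht
    simp only at hkey
    have h2 := hf1pos (T + f1 T + 1) (by linarith)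
    linarith
  rcases eq_or_lt_of_le (show α ≤ 0 by rw [hα]; linarith) with h0 | hαneg
  · -- case m = -2
    apply hlin 0 le_rfl
    intro s hs
    have := hf2le s hs
    rw [h0] at this
    simpa using this
  -- case m < -2
  have hγ3 : γ ≤ (2 / α ^ 2) ^ ((1:ℝ)/3) := by
    rcases hγ with h | h
    · exfalso; rw [hα] at hαneg; linarith
    · exact h
  -- H = f'' + α f f'
  set H : ℝ → ℝ := fun t => f2 t + α * (f t * f1 t) with hHdef
  have hHd : ∀ t, HasDerivAt H (f3 t + α * (f1 t * f1 t + f t * f2 t)) t := by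
    intro t
    exact (hd2 t).hasDerivAt.add (((hd0 t).hasDerivAt.mul (hd1 t).hasDerivAt).const_mul α)
  have hHderiv_le : ∀ x, 0 < x → deriv H x ≤ (3*m+3) * (f1 x)^2 := by
    intro x hx
    rw [(hHd x).deriv]
    have hode' := hode x hx.le
    nlinarith [sq_nonneg (f1 x)]
  have hHanti : AntitoneOn H (Ici (0:ℝ)) := by
    apply antitoneOn_of_deriv_nonpos (convex_Ici 0)
    · exact (hd2.continuous.add (continuous_const.mul (hd0.continuous.mul hd1.continuous))).continuousOn
    · intro x _
      exact (hHd x).differentiableAt.differentiableWithinAt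
    · intro x hx
      rw [interior_Ici] at hx
      have h1 := hHderiv_le x hx
      nlinarith [sq_nonneg (f1 x), mul_nonneg (show (0:ℝ) ≤ -(3*m+3) by linarith) (sq_nonneg (f1 x))]
  have hHstrict : StrictAntiOn H (Ici (0:ℝ)) := by
    apply strictAntiOn_of_deriv_neg (convex_Ici 0)
    · exact (hd2.continuous.add (continuous_const.mul (hd0.continuous.mul hd1.continuous))).continuousOn
    · intro x hx
      rw [interior_Ici] at hx
      have h1 := hHderiv_le x hx
      have h2 := hf1pos x hx.le
      nlinarith [mul_pos (show (0:ℝ) < -(3*m+3) by linarith) (mul_pos h2 h2)]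
  -- p = f' + α/2 f²
  set p : ℝ → ℝ := fun t => f1 t + α/2 * (f t)^2 with hpdef
  have hpd : ∀ t, HasDerivAt p (H t) t := by
    intro t
    have h1 : HasDerivAt (fun u => α/2 * (f u)^2)
        (α/2 * ((2:ℕ) * f t ^ (2-1) * f1 t)) t := ((hd0 t).hasDerivAt.pow 2).const_mul (α/2)
    have := (hd1 t).hasDerivAt.fun_add h1
    exact this.congr_deriv (by simp only [hHdef]; ring)
  have hpcont : Continuous p := by
    rw [hpdef]
    exact hd1.continuous.add (continuous_const.mul (hd0.continuous.pow 2))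
  have hHcont : Continuous H := by
    rw [hHdef]
    exact hd2.continuous.add (continuous_const.mul (hd0.continuous.mul hd1.continuous))
  have hmonof : MonotoneOn f (Ici (0:ℝ)) := by
    apply monotoneOn_of_deriv_nonneg (convex_Ici 0) hd0.continuous.continuousOn
      hd0.differentiableOn
    intro x hx
    rw [interior_Ici] at hx
    exact hf1nonneg x hx.le
  clear_value α f1 f2 f3 F g H p
  -- h ≥ 0 on [0,∞)
  have hH0 : ∀ t, 0 ≤ t → 0 ≤ H t := by
    by_contra hcon
    push_neg at hcon
    obtain ⟨t0, ht0, hneg⟩ := hcon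
    have hppt : ∀ t, t0 ≤ t → p t ≤ p t0 + H t0 * (t - t0) := by
      intro t ht
      have hder : ∀ x : ℝ, HasDerivAt (fun s => p s - H t0 * s) (H x - H t0 * 1) x :=
        fun x => (hpd x).sub ((hasDerivAt_id x).const_mul (H t0))
      have hanti : AntitoneOn (fun s => p s - H t0 * s) (Ici t0) := by
        apply antitoneOn_of_deriv_nonpos (convex_Ici t0)
        · exact (hpcont.sub (continuous_const.mul continuous_id)).continuousOn
        · intro x _
          exact (hder x).differentiableAt.differentiableWithinAt
        · intro x hx
          rw [interior_Ici] at hx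
          rw [(hder x).deriv]
          have := hHanti (show t0 ∈ Ici (0:ℝ) from ht0) (show x ∈ Ici (0:ℝ) from le_trans ht0 hx.le) hx.le
          simp only [mul_one]
          linarith
      have := hanti (self_mem_Ici) (show t ∈ Ici t0 from ht) ht
      simp only at this
      linarith
    by_cases hbig : ∃ T, 0 ≤ T ∧ 1 < f T
    · obtain ⟨T, hT, hfT⟩ := hbig
      have hder2 : ∀ x : ℝ, HasDerivAt (fun s => s - F s) (1 - f x) x :=
        fun x => (hasDerivAt_id x).sub (hF x)
      have hψ : AntitoneOn (fun s => s - F s) (Ici T) := by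
        apply antitoneOn_of_deriv_nonpos (convex_Ici T)
        · exact (continuous_id.sub hFcont).continuousOn
        · intro x _
          exact (hder2 x).differentiableAt.differentiableWithinAt
        · intro x hx
          rw [interior_Ici] at hx
          rw [(hder2 x).deriv]
          have : f T ≤ f x := hmonof (show T ∈ Ici (0:ℝ) from hT)
            (show x ∈ Ici (0:ℝ) from le_trans hT hx.le) hx.le
          linarith
      apply hlin (T + max 0 (-F T)) (by positivity)
      intro s hs
      have hmax := le_max_left (0:ℝ) (-F T)
      have hmax2 := le_max_right (0:ℝ) (-F T)
      have hsT : T ≤ s := by linarith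
      have hkey := hψ (self_mem_Ici) (show s ∈ Ici T from hsT) hsT
      simp only at hkey
      -- F s ≥ F T + (s - T) ≥ 0
      have hFs : 0 ≤ F s := by linarith
      have hexp : 1 ≤ Real.exp (-(α * F s)) := by
        have h1 : 0 ≤ -(α * F s) := by nlinarith
        linarith [Real.add_one_le_exp (-(α * F s))]
      have := hf2le s (by linarith)
      linarith
    · push_neg at hbig
      obtain ⟨M, hM1, hM2⟩ : ∃ M : ℝ, 1 ≤ M ∧ γ^2 ≤ M :=
        ⟨max 1 (γ^2), le_max_left _ _, le_max_right _ _⟩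
      have hfM : ∀ t, 0 ≤ t → (f t)^2 ≤ M := by
        intro t ht
        have h1 : f t ≤ 1 := hbig t ht
        have h2 : -γ ≤ f t := by
          have := hmonof (self_mem_Ici) (show t ∈ Ici (0:ℝ) from ht) ht
          rwa [hf0] at this
        rcases le_or_gt 0 (f t) with h3 | h3
        · nlinarith
        · nlinarith
      obtain ⟨Δ, hΔ0, hkey⟩ : ∃ Δ : ℝ, 0 ≤ Δ ∧ H t0 * Δ < α/2*M - p t0 := by
        refine ⟨max 0 ((α/2*M - p t0)/(H t0) + 1), le_max_left _ _, ?_⟩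
        have hΔ1 : (α/2*M - p t0)/(H t0) + 1 ≤ max 0 ((α/2*M - p t0)/(H t0) + 1) :=
          le_max_right _ _
        have h2 : H t0 * (max 0 ((α/2*M - p t0)/(H t0) + 1)) ≤
            H t0 * ((α/2*M - p t0)/(H t0) + 1) :=
          mul_le_mul_of_nonpos_left hΔ1 hneg.le
        have hne : H t0 ≠ 0 := ne_of_lt hneg
        have h3 : H t0 * ((α/2*M - p t0)/(H t0) + 1) = (α/2*M - p t0) + H t0 := by
          field_simp
        linarith
      have h4 := hppt (t0 + Δ) (by linarith)
      rw [show t0 + Δ - t0 = Δ by ring] at h4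
      have h5 : α/2 * M ≤ α/2 * (f (t0 + Δ))^2 :=
        mul_le_mul_of_nonpos_left (hfM (t0 + Δ) (by linarith)) (by linarith)
      have h6 := hf1pos (t0 + Δ) (by linarith)
      have h7 : p (t0 + Δ) = f1 (t0 + Δ) + α/2 * (f (t0 + Δ))^2 := by rw [hpdef]
      linarith
  -- p monotone on [0,∞)
  have hpmono : MonotoneOn p (Ici (0:ℝ)) := by
    apply monotoneOn_of_deriv_nonneg (convex_Ici 0)
    · exact hpcont.continuousOn
    · intro x _
      exact (hpd x).differentiableAt.differentiableWithinAt
    · intro x hx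
      rw [interior_Ici] at hx
      rw [(hpd x).deriv]
      exact hH0 x hx.le
  -- p 0 ≤ 0
  have hp0 : p 0 ≤ 0 := by
    have hev : ∀ᶠ t in atTop, p 0 ≤ f1 t := by
      filter_upwards [eventually_ge_atTop (0:ℝ)] with t ht
      have h1 := hpmono (self_mem_Ici) (show t ∈ Ici (0:ℝ) from ht) ht
      have h2 : α/2 * (f t)^2 ≤ 0 := by nlinarith [sq_nonneg (f t)]
      simp only [hpdef] at h1 ⊢
      linarith
    exact ge_of_tendsto hlim hev
  -- H 0 > 0
  have hH0pos : 0 < H 0 := by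
    have h01 : H 1 < H 0 := hHstrict (self_mem_Ici) (show (1:ℝ) ∈ Ici (0:ℝ) by norm_num) one_pos
    have := hH0 1 (by norm_num)
    linarith
  -- unfold values at 0
  have a1 : 0 < f1 0 := hf1pos 0 le_rfl
  have a2 : f1 0 + α/2 * γ^2 ≤ 0 := by
    have := hp0
    simp only [hpdef, hf0] at this
    nlinarith
  have a3 : 1 < -(α * γ * f1 0) := by
    have := hH0pos
    simp only [hHdef, hf20, hf0] at this
    nlinarith
  have hγpos : 0 < γ := by nlinarith
  -- γ³ > 2/α²
  have hcube : 2 < α^2 * γ^3 := by nlinarith [sq_nonneg α, mul_pos hγpos a1]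
  -- but γ ≤ (2/α²)^{1/3} gives γ³ ≤ 2/α²
  have hbase : (0:ℝ) < 2 / α^2 := by
    have hαne : α ≠ 0 := ne_of_lt hαneg
    positivity
  have hc : ((2/α^2) ^ ((1:ℝ)/3))^(3:ℕ) = 2/α^2 := by
    rw [show ((1:ℝ)/3) = ((3:ℕ):ℝ)⁻¹ by norm_num]
    exact Real.rpow_inv_natCast_pow hbase.le (by norm_num)
  have hγcube : γ^3 ≤ 2/α^2 := by
    calc γ^3 ≤ ((2/α^2) ^ ((1:ℝ)/3))^3 := by
          exact pow_le_pow_left₀ hγpos.le hγ3 3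
      _ = 2/α^2 := hc
  have hα2 : (0:ℝ) < α^2 := by
    have hαne : α ≠ 0 := ne_of_lt hαneg
    positivity
  have : γ^3 * α^2 ≤ 2 := (le_div_iff₀ hα2).1 hγcube
  nlinarith
end

section
/- Let m < -2 and suppose f solves f''' + (m+2) f f'' - (2m+1)(f')^2 = 0 on [0,∞) with f(0) = -γ, f''(0) = -1 and f'(∞) = 0. Then f(t) < 0 for all t ≥ 0, and moreover for all t ≥ 0: 0 < f'(t)/f(t)² < -(m+2)/2 and 0 < f''(t)/f(t)³ < -(m+2) f'(t)/f(t)². -/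
open Filter Set Topology

set_option maxHeartbeats 1000000 in
theorem stmt_10 (m γ : ℝ) (hm : m < -2)
    (f : ℝ → ℝ) (hf : ContDiff ℝ 3 f)
    (hode : ∀ t ≥ (0:ℝ), iteratedDeriv 3 f t + (m + 2) * f t * iteratedDeriv 2 f t
      - (2 * m + 1) * (deriv f t) ^ 2 = 0)
    (h0 : f 0 = -γ) (h2 : iteratedDeriv 2 f 0 = -1)
    (hlim : Filter.Tendsto (deriv f) Filter.atTop (nhds 0)) :
    ∀ t ≥ (0:ℝ), f t < 0 ∧
      0 < deriv f t / (f t) ^ 2 ∧ deriv f t / (f t) ^ 2 < -(m + 2) / 2 ∧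
      0 < iteratedDeriv 2 f t / (f t) ^ 3 ∧
      iteratedDeriv 2 f t / (f t) ^ 3 < -(m + 2) * (deriv f t / (f t) ^ 2) := by
  have hdf : Differentiable ℝ f := hf.differentiable (by norm_num)
  have hdf1 : Differentiable ℝ (deriv f) := by
    have := hf.differentiable_iteratedDeriv 1 (by norm_num)
    rwa [iteratedDeriv_one] at this
  have hdf2 : Differentiable ℝ (iteratedDeriv 2 f) :=
    hf.differentiable_iteratedDeriv 2 (by norm_num)
  have e2 : deriv (deriv f) = iteratedDeriv 2 f := by
    simp only [show (2:ℕ)=1+1 from rfl, iteratedDeriv_succ, iteratedDeriv_one,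
      iteratedDeriv_zero]
  have e3 : deriv (iteratedDeriv 2 f) = iteratedDeriv 3 f := by
    simp only [show (3:ℕ)=2+1 from rfl, show (2:ℕ)=1+1 from rfl, iteratedDeriv_succ,
      iteratedDeriv_one, iteratedDeriv_zero]
  have H1 : ∀ t : ℝ, HasDerivAt f (deriv f t) t := fun t => (hdf t).hasDerivAt
  have H2 : ∀ t : ℝ, HasDerivAt (deriv f) (iteratedDeriv 2 f t) t := fun t => by
    have := (hdf1 t).hasDerivAt; rwa [e2] at this
  have H3 : ∀ t : ℝ, HasDerivAt (iteratedDeriv 2 f) (iteratedDeriv 3 f t) t := fun t => by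
    have := (hdf2 t).hasDerivAt; rwa [e3] at this
  -- Claim 1 : f'' < 0 on [0,∞)
  have h2neg : ∀ t ≥ (0:ℝ), iteratedDeriv 2 f t < 0 := by
    by_contra hcon
    push_neg at hcon
    obtain ⟨t₁, ht₁, hle⟩ := hcon
    have hc2 : Continuous (iteratedDeriv 2 f) := hdf2.continuous
    have hAclosed : IsClosed (Ici 0 ∩ (iteratedDeriv 2 f) ⁻¹' {0}) :=
      isClosed_Ici.inter (isClosed_singleton.preimage hc2)
    have hAne : (Ici 0 ∩ (iteratedDeriv 2 f) ⁻¹' {0}).Nonempty := by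
      rcases lt_or_eq_of_le hle with h | h
      · have hmem : (0:ℝ) ∈ Icc (iteratedDeriv 2 f 0) (iteratedDeriv 2 f t₁) :=
          ⟨by rw [h2]; norm_num, le_of_lt h⟩
        obtain ⟨s, hs, hs0⟩ := intermediate_value_Icc ht₁ hc2.continuousOn hmem
        exact ⟨s, ⟨hs.1, hs0⟩⟩
      · exact ⟨t₁, ⟨ht₁, h.symm⟩⟩
    have hbdd : BddBelow (Ici 0 ∩ (iteratedDeriv 2 f) ⁻¹' {0}) := ⟨0, fun x hx => hx.1⟩
    set T := sInf (Ici 0 ∩ (iteratedDeriv 2 f) ⁻¹' {0}) with hTdef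
    have hTA : T ∈ Ici 0 ∩ (iteratedDeriv 2 f) ⁻¹' {0} := hAclosed.csInf_mem hAne hbdd
    have hT0 : (0:ℝ) ≤ T := hTA.1
    have hT2 : iteratedDeriv 2 f T = 0 := hTA.2
    have hTpos : 0 < T := by
      rcases eq_or_lt_of_le hT0 with h | h
      · exfalso; rw [← h] at hT2; rw [h2] at hT2; norm_num at hT2
      · exact h
    have hbefore : ∀ s, 0 ≤ s → s < T → iteratedDeriv 2 f s < 0 := by
      intro s hs hsT
      rcases lt_trichotomy (iteratedDeriv 2 f s) 0 with h | h | h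
      · exact h
      · exact absurd (csInf_le hbdd ⟨hs, h⟩) (not_le.mpr hsT)
      · exfalso
        have hmem : (0:ℝ) ∈ Icc (iteratedDeriv 2 f 0) (iteratedDeriv 2 f s) :=
          ⟨by rw [h2]; norm_num, le_of_lt h⟩
        obtain ⟨r, hr, hr0⟩ := intermediate_value_Icc hs hc2.continuousOn hmem
        have : T ≤ r := csInf_le hbdd ⟨hr.1, hr0⟩
        linarith [hr.2]
    rcases eq_or_ne (deriv f T) 0 with h1T | h1T
    · -- Gronwall case : f'(T) = f''(T) = 0 forces f''(0) = 0, contradiction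
      obtain ⟨M, hM⟩ := (isCompact_Icc (a := (0:ℝ)) (b := T)).exists_bound_of_continuousOn
        hdf.continuous.continuousOn
      obtain ⟨M', hM'⟩ := (isCompact_Icc (a := (0:ℝ)) (b := T)).exists_bound_of_continuousOn
        hdf1.continuous.continuousOn
      have hmem0 : (0:ℝ) ∈ Icc (0:ℝ) T := ⟨le_refl 0, hT0⟩
      have hM0 : 0 ≤ M := le_trans (norm_nonneg _) (hM 0 hmem0)
      have hM'0 : 0 ≤ M' := le_trans (norm_nonneg _) (hM' 0 hmem0)
      set C := 1 + 2*(-(m+2))*M + (-(2*m+1))*M' with hCdef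
      set h := fun s => deriv f s * deriv f s + iteratedDeriv 2 f s * iteratedDeriv 2 f s
        with hhdef
      have Hh : ∀ s, HasDerivAt h (2 * deriv f s * iteratedDeriv 2 f s
          + 2 * iteratedDeriv 2 f s * iteratedDeriv 3 f s) s := by
        intro s
        have := ((H2 s).mul (H2 s)).add ((H3 s).mul (H3 s))
        refine this.congr_deriv ?_
        ring
      have hcont : Continuous h := (hdf1.continuous.mul hdf1.continuous).add
        (hc2.mul hc2)
      have hderφ : ∀ x : ℝ, HasDerivAt (fun s => h s * Real.exp (C * s))
          ((2 * deriv f x * iteratedDeriv 2 f x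
            + 2 * iteratedDeriv 2 f x * iteratedDeriv 3 f x + C * h x)
            * Real.exp (C*x)) x := by
        intro x
        have he : HasDerivAt (fun s => Real.exp (C*s)) (C * Real.exp (C*x)) x := by
          have := (Real.hasDerivAt_exp (C*x)).comp x ((hasDerivAt_id x).const_mul C)
          refine this.congr_deriv ?_
          ring
        have := (Hh x).mul he
        refine this.congr_deriv ?_
        simp only [hhdef]
        ring
      have Hφmono : MonotoneOn (fun s => h s * Real.exp (C * s)) (Icc 0 T) := by
        apply monotoneOn_of_deriv_nonneg (convex_Icc 0 T)
        · exact (hcont.mul (Real.continuous_exp.comp (continuous_const.mul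
            continuous_id))).continuousOn
        · exact fun x _ => (hderφ x).differentiableAt.differentiableWithinAt
        · intro x hx
          rw [interior_Icc] at hx
          have hx0 : (0:ℝ) ≤ x := hx.1.le
          have hxT : x ∈ Icc (0:ℝ) T := ⟨hx.1.le, hx.2.le⟩
          rw [(hderφ x).deriv]
          apply mul_nonneg _ (Real.exp_nonneg _)
          have hodex := hode x hx0
          have hfb := hM x hxT
          have hf1b := hM' x hxT
          rw [Real.norm_eq_abs, abs_le] at hfb hf1b
          have hf3 : iteratedDeriv 3 f x
              = -(m+2) * f x * iteratedDeriv 2 f x + (2*m+1) * deriv f x ^ 2 := by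
            linarith [hodex]
          simp only [hhdef]
          rw [hCdef, hf3]
          nlinarith [sq_nonneg (deriv f x + iteratedDeriv 2 f x),
            sq_nonneg (deriv f x - iteratedDeriv 2 f x),
            mul_nonneg (mul_nonneg (show (0:ℝ) ≤ -(m+2) by linarith)
              (show 0 ≤ M + f x by linarith [hfb.1])) (sq_nonneg (iteratedDeriv 2 f x)),
            mul_nonneg (mul_nonneg (show (0:ℝ) ≤ -(m+2) by linarith) hM0)
              (sq_nonneg (deriv f x)),
            mul_nonneg (mul_nonneg (show (0:ℝ) ≤ -(2*m+1) by linarith)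
              (show 0 ≤ M' - deriv f x by linarith [hf1b.2]))
              (sq_nonneg (deriv f x + iteratedDeriv 2 f x)),
            mul_nonneg (mul_nonneg (show (0:ℝ) ≤ -(2*m+1) by linarith)
              (show 0 ≤ M' + deriv f x by linarith [hf1b.1]))
              (sq_nonneg (deriv f x - iteratedDeriv 2 f x))]
      have hφT : h T * Real.exp (C * T) = 0 := by
        simp [hhdef, h1T, hT2]
      have hφ0 : h 0 * Real.exp (C * 0) ≤ h T * Real.exp (C * T) :=
        Hφmono ⟨le_refl 0, hT0⟩ ⟨hT0, le_refl T⟩ hT0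
      have hh0 : h 0 = deriv f 0 * deriv f 0 + 1 := by
        simp [hhdef, h2]
      nlinarith [mul_self_nonneg (deriv f 0), Real.exp_pos (C * 0)]
    · -- transversal case : f'''(T) < 0 forces f'' > 0 just before T
      have hd3T : iteratedDeriv 3 f T < 0 := by
        have hodeT := hode T hT0
        rw [hT2] at hodeT
        have hsq : 0 < (deriv f T)^2 :=
          lt_of_le_of_ne (sq_nonneg _) (Ne.symm (pow_ne_zero 2 h1T))
        nlinarith
      have hslope : Tendsto (slope (iteratedDeriv 2 f) T) (𝓝[≠] T)
          (𝓝 (iteratedDeriv 3 f T)) := hasDerivAt_iff_tendsto_slope.mp (H3 T)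
      have hev1 : ∀ᶠ s in 𝓝[<] T, slope (iteratedDeriv 2 f) T s < 0 :=
        (hslope.eventually_lt_const hd3T).filter_mono
          (nhdsWithin_mono T fun s hs => ne_of_lt hs)
      have hmemIoo : Ioo (max 0 (T-1)) T ∈ 𝓝[<] T :=
        Ioo_mem_nhdsLT_of_mem ⟨max_lt hTpos (by linarith), le_refl T⟩
      obtain ⟨s, hss, hsmem⟩ := (hev1.and (eventually_of_mem hmemIoo fun x hx => hx)).exists
      have hsT : s < T := hsmem.2
      have hs0 : (0:ℝ) ≤ s := le_trans (le_max_left _ _) (le_of_lt hsmem.1)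
      have hpos : 0 < iteratedDeriv 2 f s := by
        rw [slope_def_field, hT2] at hss
        rcases div_neg_iff.mp hss with ⟨hnum, hden⟩ | ⟨hnum, hden⟩
        · linarith
        · linarith
      linarith [hbefore s hs0 hsT]
  -- Claim 2 : f' > 0 on [0,∞)
  have h1pos : ∀ t ≥ (0:ℝ), 0 < deriv f t := by
    by_contra hcon
    push_neg at hcon
    obtain ⟨t₀, ht₀, hle⟩ := hcon
    have hanti : StrictAntiOn (deriv f) (Ici 0) := by
      apply strictAntiOn_of_deriv_neg (convex_Ici 0) hdf1.continuous.continuousOn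
      intro x hx
      rw [e2]
      exact h2neg x (le_of_lt (by simpa [interior_Ici] using hx))
    have hδ : deriv f (t₀+1) < 0 :=
      lt_of_lt_of_le (hanti (mem_Ici.mpr ht₀) (mem_Ici.mpr (by linarith)) (lt_add_one t₀)) hle
    obtain ⟨N, hN⟩ := eventually_atTop.mp (hlim.eventually_const_lt hδ)
    have hgt := hN (max N (t₀+2)) (le_max_left _ _)
    have hlt : deriv f (max N (t₀+2)) < deriv f (t₀+1) := by
      apply hanti (mem_Ici.mpr (by linarith)) (mem_Ici.mpr ?_) ?_
      · have : t₀+2 ≤ max N (t₀+2) := le_max_right _ _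
        linarith
      · exact lt_of_lt_of_le (by linarith) (le_max_right N (t₀+2))
    linarith
  have hfmono : StrictMonoOn f (Ici 0) := by
    apply strictMonoOn_of_deriv_pos (convex_Ici 0) hdf.continuous.continuousOn
    intro x hx
    exact h1pos x (le_of_lt (by simpa [interior_Ici] using hx))
  -- Claim 3 : f < 0 on [0,∞)
  have hfneg : ∀ t ≥ (0:ℝ), f t < 0 := by
    by_contra hcon
    push_neg at hcon
    obtain ⟨t₁, ht₁, hge⟩ := hcon
    have ht₂ : (0:ℝ) ≤ t₁ + 1 := by linarith
    have hf₂ : 0 < f (t₁+1) :=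
      lt_of_le_of_lt hge (hfmono (mem_Ici.mpr ht₁) (mem_Ici.mpr ht₂) (lt_add_one _))
    have hfpos : ∀ t, t₁+1 ≤ t → 0 < f t := fun t ht =>
      lt_of_lt_of_le hf₂ (hfmono.monotoneOn (mem_Ici.mpr ht₂) (mem_Ici.mpr (by linarith)) ht)
    have hanti2 : AntitoneOn (iteratedDeriv 2 f) (Ici (t₁+1)) := by
      apply antitoneOn_of_deriv_nonpos (convex_Ici _) hdf2.continuous.continuousOn
        (fun x _ => (hdf2 x).differentiableWithinAt)
      intro x hx
      have hx' : t₁+1 < x := by simpa [interior_Ici] using hx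
      have hx0 : (0:ℝ) ≤ x := by linarith
      rw [e3]
      have hodex := hode x hx0
      have hfx := hfpos x hx'.le
      have h2x := h2neg x hx0
      nlinarith [sq_nonneg (deriv f x), mul_pos hfx (neg_pos.mpr h2x)]
    have hη : 0 < -(iteratedDeriv 2 f (t₁+1)) := neg_pos.mpr (h2neg _ ht₂)
    set η := -(iteratedDeriv 2 f (t₁+1)) with hηdef
    have hlin : AntitoneOn (fun s => deriv f s + η * s) (Ici (t₁+1)) := by
      apply antitoneOn_of_deriv_nonpos (convex_Ici _)
      · exact (hdf1.continuous.add (continuous_const.mul continuous_id)).continuousOn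
      · exact fun x _ => ((H2 x).add ((hasDerivAt_id x).const_mul η)).differentiableAt.differentiableWithinAt
      · intro x hx
        have hx' : t₁+1 < x := by simpa [interior_Ici] using hx
        have hd : HasDerivAt (fun s => deriv f s + η * s) (iteratedDeriv 2 f x + η) x := by
          have := (H2 x).add ((hasDerivAt_id x).const_mul η)
          refine this.congr_deriv ?_
          ring
        rw [hd.deriv]
        have := hanti2 (self_mem_Ici) (mem_Ici.mpr hx'.le) hx'.le
        simp only [hηdef] at *
        linarith
    set t₃ := t₁ + 1 + (deriv f (t₁+1) + 1)/η with ht₃def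
    have hq : 0 < (deriv f (t₁+1) + 1)/η := div_pos (by linarith [h1pos _ ht₂]) hη
    have ht₃ : t₁+1 ≤ t₃ := by simp only [ht₃def]; linarith
    have hkey := hlin (self_mem_Ici) (mem_Ici.mpr ht₃) ht₃
    have hηt : η * t₃ = η*(t₁+1) + (deriv f (t₁+1) + 1) := by
      rw [ht₃def]
      field_simp
    have ht₃0 : (0:ℝ) ≤ t₃ := by linarith
    have := h1pos t₃ ht₃0
    simp only at hkey
    linarith
  -- the function Q = f'' + (m+2) f f'
  have hQd : ∀ t ≥ (0:ℝ), HasDerivAt (fun s => iteratedDeriv 2 f s + (m+2) * (f s * deriv f s))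
      (3*(m+1) * (deriv f t)^2) t := by
    intro t ht
    have h := ((H3 t).add (((H1 t).mul (H2 t)).const_mul (m+2)))
    refine h.congr_deriv (Eq.symm ?_)
    linear_combination (-1 : ℝ) * hode t ht
  -- Claim 4 : Q > 0 on [0,∞)
  have Qpos : ∀ t ≥ (0:ℝ), 0 < iteratedDeriv 2 f t + (m+2) * (f t * deriv f t) := by
    by_contra hcon
    push_neg at hcon
    obtain ⟨t₀, ht₀, hle⟩ := hcon
    have hQanti : StrictAntiOn (fun s => iteratedDeriv 2 f s + (m+2) * (f s * deriv f s))
        (Ici 0) := by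
      apply strictAntiOn_of_deriv_neg (convex_Ici 0)
      · exact (hdf2.continuous.add (continuous_const.mul
          (hdf.continuous.mul hdf1.continuous))).continuousOn
      · intro x hx
        have hx' : 0 < x := by simpa [interior_Ici] using hx
        rw [(hQd x hx'.le).deriv]
        have hsq : 0 < deriv f x ^ 2 := pow_pos (h1pos x hx'.le) 2
        nlinarith
    have hT0 : (0:ℝ) ≤ t₀ + 1 := by linarith
    have hε : iteratedDeriv 2 f (t₀+1) + (m+2) * (f (t₀+1) * deriv f (t₀+1)) < 0 :=
      lt_of_lt_of_le (hQanti (mem_Ici.mpr ht₀) (mem_Ici.mpr hT0) (lt_add_one _)) hle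
    set T := t₀ + 1 with hTdef
    set ε := -(iteratedDeriv 2 f T + (m+2) * (f T * deriv f T)) with hεdef
    have hεpos : 0 < ε := by simp only [hεdef]; linarith
    have hQle : ∀ t, T ≤ t →
        iteratedDeriv 2 f t + (m+2) * (f t * deriv f t) ≤ -ε := by
      intro t htT
      have := hQanti.antitoneOn (mem_Ici.mpr hT0) (mem_Ici.mpr (by linarith)) htT
      simp only [hεdef]
      simpa using this
    have hPanti : AntitoneOn (fun s => (deriv f s + (m+2)/2 * (f s * f s)) + ε * s)
        (Ici T) := by
      apply antitoneOn_of_deriv_nonpos (convex_Ici _)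
      · exact ((hdf1.continuous.add (continuous_const.mul
          (hdf.continuous.mul hdf.continuous))).add
          (continuous_const.mul continuous_id)).continuousOn
      · exact fun x _ => (((H2 x).add (((H1 x).mul (H1 x)).const_mul ((m+2)/2))).add
          ((hasDerivAt_id x).const_mul ε)).differentiableAt.differentiableWithinAt
      · intro x hx
        have hx' : T < x := by simpa [interior_Ici] using hx
        have hd : HasDerivAt (fun s => (deriv f s + (m+2)/2 * (f s * f s)) + ε * s)
            ((iteratedDeriv 2 f x + (m+2) * (f x * deriv f x)) + ε) x := by
          have := ((H2 x).add (((H1 x).mul (H1 x)).const_mul ((m+2)/2))).add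
            ((hasDerivAt_id x).const_mul ε)
          refine this.congr_deriv ?_
          ring
        rw [hd.deriv]
        linarith [hQle x hx'.le]
    have hbddsq : ∀ t, 0 ≤ t → f t * f t ≤ f 0 * f 0 := by
      intro t ht
      have h00 : f 0 ≤ f t := hfmono.monotoneOn (self_mem_Ici) (mem_Ici.mpr ht) ht
      have := hfneg t ht
      nlinarith
    set c := (-(m+2))/2 * (f 0 * f 0) with hcdef
    have hc0 : 0 ≤ c := mul_nonneg (by linarith) (mul_self_nonneg _)
    set B := |deriv f T + (m+2)/2 * (f T * f T)| + c + 1 with hBdef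
    have hB : 0 < B := by
      have := abs_nonneg (deriv f T + (m+2)/2 * (f T * f T))
      simp only [hBdef]; linarith
    set t := T + B/ε with htdef
    have htT : T ≤ t := by
      have := div_pos hB hεpos
      simp only [htdef]; linarith
    have ht0 : (0:ℝ) ≤ t := by linarith
    have hPle := hPanti (self_mem_Ici) (mem_Ici.mpr htT) htT
    simp only at hPle
    have hεt : ε * t = ε * T + B := by
      rw [htdef]
      field_simp
    have habs : deriv f T + (m+2)/2 * (f T * f T)
        ≤ |deriv f T + (m+2)/2 * (f T * f T)| := le_abs_self _
    have hsqcmp : (m+2)/2 * (f 0 * f 0) ≤ (m+2)/2 * (f t * f t) :=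
      mul_le_mul_of_nonpos_left (hbddsq t ht0) (by linarith)
    have hf1t := h1pos t ht0
    simp only [hcdef] at hc0 hsqcmp
    simp only [hBdef, hcdef] at hεt
    linarith
  -- the function P = f' + (m+2)/2 f², P' = Q
  have hPd : ∀ t : ℝ, HasDerivAt (fun s => deriv f s + (m+2)/2 * (f s * f s))
      (iteratedDeriv 2 f t + (m+2) * (f t * deriv f t)) t := by
    intro t
    have h := ((H2 t).add (((H1 t).mul (H1 t)).const_mul ((m+2)/2)))
    refine h.congr_deriv ?_
    ring
  -- Claim 5 : P < 0 on [0,∞)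
  have Ppos : ∀ t ≥ (0:ℝ), deriv f t + (m+2)/2 * (f t * f t) < 0 := by
    by_contra hcon
    push_neg at hcon
    obtain ⟨t₀, ht₀, hge⟩ := hcon
    have hPmono : StrictMonoOn (fun s => deriv f s + (m+2)/2 * (f s * f s)) (Ici 0) := by
      apply strictMonoOn_of_deriv_pos (convex_Ici 0)
      · exact (hdf1.continuous.add (continuous_const.mul
          (hdf.continuous.mul hdf.continuous))).continuousOn
      · intro x hx
        have hx' : 0 < x := by simpa [interior_Ici] using hx
        rw [(hPd x).deriv]
        exact Qpos x hx'.le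
    have hδ : 0 < deriv f (t₀+1) + (m+2)/2 * (f (t₀+1) * f (t₀+1)) :=
      lt_of_le_of_lt hge (hPmono (mem_Ici.mpr ht₀) (mem_Ici.mpr (by linarith)) (lt_add_one _))
    obtain ⟨N, hN⟩ := eventually_atTop.mp (hlim.eventually_lt_const hδ)
    set t := max N (t₀+1) with htdef
    have hlt := hN t (le_max_left _ _)
    have htt : t₀+1 ≤ t := le_max_right _ _
    have hmle : deriv f (t₀+1) + (m+2)/2 * (f (t₀+1) * f (t₀+1))
        ≤ deriv f t + (m+2)/2 * (f t * f t) :=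
      hPmono.monotoneOn (mem_Ici.mpr (by linarith : (0:ℝ) ≤ t₀+1))
        (mem_Ici.mpr (by linarith : (0:ℝ) ≤ t)) htt
    have hsq : 0 ≤ f t * f t := mul_self_nonneg _
    have : (m+2)/2 * (f t * f t) ≤ 0 :=
      mul_nonpos_of_nonpos_of_nonneg (by linarith) hsq
    linarith
  -- Final assembly
  intro t ht
  have hft := hfneg t ht
  have h1t := h1pos t ht
  have h2t := h2neg t ht
  have hQt := Qpos t ht
  have hPt := Ppos t ht
  have hne : f t ≠ 0 := ne_of_lt hft
  have hsq : 0 < (f t)^2 := by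
    have h' : (f t)^2 = f t * f t := by ring
    nlinarith [mul_pos (neg_pos.mpr hft) (neg_pos.mpr hft)]
  have hcube : (f t)^3 < 0 := by
    have h3 : (f t)^3 = f t * (f t)^2 := by ring
    rw [h3]
    exact mul_neg_of_neg_of_pos hft hsq
  refine ⟨hft, div_pos h1t hsq, ?_, ?_, ?_⟩
  · rw [div_lt_iff₀ hsq]
    have hsq' : (f t)^2 = f t * f t := by ring
    linarith
  · have hrw : iteratedDeriv 2 f t / (f t)^3 = (-iteratedDeriv 2 f t) / (-(f t)^3) := by
      ring
    rw [hrw]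
    exact div_pos (by linarith) (by linarith)
  · rw [div_lt_iff_of_neg hcube]
    have hexp : -(m+2) * (deriv f t / (f t)^2) * (f t)^3 = -((m+2) * (f t * deriv f t)) := by
      field_simp
    rw [hexp]
    linarith
end

section
/- Let -2 < m < -1 and γ ≥ 0. Then the problem f''' + (m+2) f f'' - (2m+1)(f')^2 = 0 on [0,∞) with f(0) = -γ, f''(0) = -1, f'(∞) = 0 has no solution. -/
open Filter Set intervalIntegral

set_option maxHeartbeats 2000000 in
theorem stmt_11 (m γ : ℝ) (hm₁ : -2 < m) (hm₂ : m < -1) (hγ : γ ≥ 0) :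
    ¬ ∃ f : ℝ → ℝ, ContDiff ℝ 3 f ∧
      (∀ t ≥ (0:ℝ), iteratedDeriv 3 f t + (m + 2) * f t * iteratedDeriv 2 f t
        - (2 * m + 1) * (deriv f t) ^ 2 = 0) ∧
      f 0 = -γ ∧ iteratedDeriv 2 f 0 = -1 ∧
      Filter.Tendsto (deriv f) Filter.atTop (nhds 0) := by
  rintro ⟨f, hf, hode, hf0, hf20, hlim⟩
  set f1 := deriv f with hf1def
  set f2 := deriv f1 with hf2def
  set f3 := deriv f2 with hf3def
  -- regularity
  have hCf1 : ContDiff ℝ 2 f1 :=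
    (contDiff_succ_iff_deriv.mp (show ContDiff ℝ (2+1) f by norm_num [hf])).2.2
  have hCf2 : ContDiff ℝ 1 f2 :=
    (contDiff_succ_iff_deriv.mp (show ContDiff ℝ (1+1) f1 by norm_num [hCf1])).2.2
  have hcf : Continuous f := hf.continuous
  have hcf1 : Continuous f1 := hCf1.continuous
  have hcf2 : Continuous f2 := hCf2.continuous
  have hcf3 : Continuous f3 := (contDiff_one_iff_deriv.mp hCf2).2
  have hdf : ∀ t, HasDerivAt f (f1 t) t := fun t =>
    (hf.differentiable (by norm_num) t).hasDerivAt
  have hdf1 : ∀ t, HasDerivAt f1 (f2 t) t := fun t =>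
    (hCf1.differentiable (by norm_num) t).hasDerivAt
  have hdf2 : ∀ t, HasDerivAt f2 (f3 t) t := fun t =>
    (hCf2.differentiable (by norm_num) t).hasDerivAt
  -- rewrite the ODE and initial conditions
  have h2eq : iteratedDeriv 2 f = f2 := by
    simp [hf2def, hf1def, iteratedDeriv_succ, iteratedDeriv_zero]
  have h3eq : iteratedDeriv 3 f = f3 := by
    simp [hf3def, hf2def, hf1def, iteratedDeriv_succ, iteratedDeriv_zero]
  rw [h2eq] at hf20
  have hode' : ∀ t ≥ (0:ℝ), f3 t = (2*m+1)*(f1 t)^2 - (m+2) * f t * f2 t := by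
    intro t ht
    have := hode t ht
    rw [h2eq, h3eq] at this
    linarith
  -- the monotone quantity φ
  set φ : ℝ → ℝ := fun t => f2 t + (m+2) * (f t * f1 t) with hφdef
  have hdφ : ∀ t, HasDerivAt φ (f3 t + (m+2) * (f1 t * f1 t + f t * f2 t)) t := by
    intro t
    exact (hdf2 t).add (((hdf t).mul (hdf1 t)).const_mul (m+2))
  have hcφ : Continuous φ := by
    exact hcf2.add ((continuous_const).mul (hcf.mul hcf1))
  have hφanti : AntitoneOn φ (Set.Ici 0) := by
    apply antitoneOn_of_deriv_nonpos (convex_Ici 0) hcφ.continuousOn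
      (fun x _ => (hdφ x).differentiableAt.differentiableWithinAt)
    intro x hx
    rw [interior_Ici] at hx
    rw [(hdφ x).deriv, hode' x (le_of_lt hx)]
    nlinarith [sq_nonneg (f1 x)]
  have hφ0 : φ 0 = -1 - (m+2) * γ * f1 0 := by
    simp [hφdef, hf20, hf0]; ring
  by_cases hcase : ∀ t ≥ (0:ℝ), 0 ≤ φ t
  · -- Case B : φ ≥ 0 everywhere
    have h0 := hcase 0 le_rfl
    rw [hφ0] at h0
    have hm2 : 0 < m + 2 := by linarith
    have hγpos : 0 < γ := by
      rcases lt_or_eq_of_le hγ with h | h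
      · exact h
      · exfalso; rw [← h] at h0; simp at h0; linarith
    set c := (m+2) * γ with hcdef
    have hcpos : 0 < c := by positivity
    have hcinv : 0 < c⁻¹ := by positivity
    have hcc : c * c⁻¹ = 1 := mul_inv_cancel₀ (ne_of_gt hcpos)
    have hf10 : f1 0 ≤ -c⁻¹ := by nlinarith [h0, hcpos, hcc]
    -- the integrating factor
    set F : ℝ → ℝ := fun t => ∫ s in (0:ℝ)..t, f s with hFdef
    have hdF : ∀ t, HasDerivAt F (f t) t := fun t =>
      intervalIntegral.integral_hasDerivAt_right (hcf.intervalIntegrable _ _)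
        (hcf.stronglyMeasurableAtFilter _ _) hcf.continuousAt
    have hcF : Continuous F := continuous_iff_continuousAt.mpr fun t => (hdF t).continuousAt
    set W : ℝ → ℝ := fun t => Real.exp ((m+2) * F t) with hWdef
    have hcW : Continuous W := Real.continuous_exp.comp (continuous_const.mul hcF)
    have hdW : ∀ t, HasDerivAt W (W t * ((m+2) * f t)) t := fun t =>
      ((hdF t).const_mul (m+2)).exp
    set v : ℝ → ℝ := fun t => f1 t * W t with hvdef
    have hdv : ∀ t, HasDerivAt v (φ t * W t) t := by
      intro t
      have H := (hdf1 t).mul (hdW t)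
      refine H.congr_deriv ?_
      show f2 t * W t + f1 t * (W t * ((m+2) * f t)) = (f2 t + (m+2) * (f t * f1 t)) * W t; ring
    have hv0 : v 0 = f1 0 := by
      simp [hvdef, hWdef, hFdef, intervalIntegral.integral_same, Real.exp_zero]
    -- key step
    have key : ∀ t, 0 ≤ t → (∀ s ∈ Set.Icc (0:ℝ) t, f1 s ≤ -(c⁻¹/2)) → f1 t ≤ -c⁻¹ := by
      intro t ht hs
      have hfmono : AntitoneOn f (Set.Icc 0 t) := by
        apply antitoneOn_of_deriv_nonpos (convex_Icc 0 t) hcf.continuousOn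
          (fun x _ => (hdf x).differentiableAt.differentiableWithinAt)
        intro x hx
        rw [interior_Icc] at hx
        rw [(hdf x).deriv]
        have := hs x ⟨le_of_lt hx.1, le_of_lt hx.2⟩
        linarith
      have hfle : ∀ s ∈ Set.Icc (0:ℝ) t, f s ≤ -γ := by
        intro s hs'
        have := hfmono (Set.left_mem_Icc.mpr ht) hs' hs'.1
        rw [hf0] at this; exact this
      have hFle : ∀ s ∈ Set.Icc (0:ℝ) t, F s ≤ -γ * s := by
        intro s hs'
        have h1 : F s ≤ ∫ x in (0:ℝ)..s, (-γ) := by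
          apply intervalIntegral.integral_mono_on hs'.1 (hcf.intervalIntegrable _ _)
            intervalIntegrable_const
          intro x hx; exact hfle x ⟨hx.1, le_trans hx.2 hs'.2⟩
        rw [intervalIntegral.integral_const] at h1
        simp at h1
        linarith
      have hWle : ∀ s ∈ Set.Icc (0:ℝ) t, W s ≤ Real.exp (-(c * s)) := by
        intro s hs'
        apply Real.exp_le_exp.mpr
        have h1 := hFle s hs'
        have h2 : (m+2) * F s ≤ (m+2) * (-γ * s) :=
          mul_le_mul_of_nonneg_left h1 (le_of_lt hm2)
        rw [hcdef]; nlinarith [h2]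
      have hftc : ∫ s in (0:ℝ)..t, φ s * W s = v t - v 0 :=
        intervalIntegral.integral_eq_sub_of_hasDerivAt (fun s _ => hdv s)
          ((hcφ.mul hcW).intervalIntegrable _ _)
      have hcexp : Continuous (fun s : ℝ => Real.exp (-(c * s))) := by
        exact Real.continuous_exp.comp (continuous_const.mul continuous_id).neg
      have hbound : ∫ s in (0:ℝ)..t, φ s * W s ≤ ∫ s in (0:ℝ)..t, φ 0 * Real.exp (-(c*s)) := by
        apply intervalIntegral.integral_mono_on ht ((hcφ.mul hcW).intervalIntegrable _ _)
          ((continuous_const.mul hcexp).intervalIntegrable _ _)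
        intro x hx
        have h1 : 0 ≤ φ x := hcase x hx.1
        have h2 : φ x ≤ φ 0 := hφanti Set.self_mem_Ici hx.1 hx.1
        have h3 : 0 < W x := Real.exp_pos _
        have h4 : W x ≤ Real.exp (-(c*x)) := hWle x hx
        show φ x * W x ≤ φ 0 * Real.exp (-(c*x))
        nlinarith
      have hexp : ∫ s in (0:ℝ)..t, Real.exp (-(c*s)) = (1 - Real.exp (-(c*t)))/c := by
        have hder : ∀ s ∈ Set.uIcc (0:ℝ) t, HasDerivAt (fun x => -(Real.exp (-(c*x))/c))
            (Real.exp (-(c*s))) s := by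
          intro s _
          have H : HasDerivAt (fun x : ℝ => Real.exp (-(c*x))) (Real.exp (-(c*s)) * -c) s := by
            have H0 : HasDerivAt (fun x : ℝ => -(c*x)) (-c) s := by
              simpa using ((hasDerivAt_id s).const_mul (-c))
            exact H0.exp
          have H2 := (H.div_const c).neg
          refine H2.congr_deriv ?_
          show -(Real.exp (-(c*s)) * -c / c) = Real.exp (-(c*s))
          rw [mul_neg, neg_div, neg_neg, mul_div_assoc, div_self (ne_of_gt hcpos), mul_one]
        rw [intervalIntegral.integral_eq_sub_of_hasDerivAt hder (hcexp.intervalIntegrable _ _)]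
        rw [mul_zero, neg_zero, Real.exp_zero]
        field_simp
        ring
      have h5 : ∫ s in (0:ℝ)..t, φ 0 * Real.exp (-(c*s)) = φ 0 * ((1 - Real.exp (-(c*t)))/c) := by
        rw [intervalIntegral.integral_const_mul, hexp]
      have hφ0nn : 0 ≤ φ 0 := hcase 0 le_rfl
      have h6 : φ 0 * ((1 - Real.exp (-(c*t)))/c) ≤ φ 0 / c := by
        rw [← mul_div_assoc]
        apply (div_le_div_iff_of_pos_right hcpos).mpr
        nlinarith [mul_nonneg hφ0nn (Real.exp_pos (-(c*t))).le]
      have hvt : v t ≤ -c⁻¹ := by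
        have h7 : v t - v 0 ≤ φ 0 / c := by
          rw [← hftc]
          exact le_trans hbound (le_of_eq h5 |>.trans h6)
        rw [hv0] at h7
        have hφ0' : φ 0 / c = -c⁻¹ - f1 0 := by
          rw [hφ0]; field_simp
        linarith
      have hWt1 : W t ≤ 1 := by
        have h8 := hWle t ⟨ht, le_refl t⟩
        have h9 : Real.exp (-(c*t)) ≤ 1 := by
          rw [← Real.exp_zero]
          apply Real.exp_le_exp.mpr
          nlinarith [mul_nonneg hcpos.le ht]
        linarith
      have hWpos : 0 < W t := Real.exp_pos _
      have hv' : f1 t * W t ≤ -c⁻¹ := hvt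
      have hf1neg : f1 t ≤ 0 := by
        by_contra hpos
        push_neg at hpos
        have := mul_pos hpos hWpos
        linarith
      have h10 : 0 ≤ -f1 t * (1 - W t) :=
        mul_nonneg (neg_nonneg.mpr hf1neg) (sub_nonneg.mpr hWt1)
      nlinarith [h10, hv']
    -- continuous induction: f1 ≤ -(c⁻¹/2) on [0,∞)
    have hall : ∀ t, 0 ≤ t → f1 t ≤ -(c⁻¹/2) := by
      by_contra hB
      push_neg at hB
      obtain ⟨t', ht', hft'⟩ := hB
      set B := {s : ℝ | 0 ≤ s ∧ -(c⁻¹/2) < f1 s} with hBdef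
      have hBne : B.Nonempty := ⟨t', ht', hft'⟩
      have hBbd : BddBelow B := ⟨0, fun x hx => hx.1⟩
      set t₁ := sInf B with ht₁def
      have ht₁0 : 0 ≤ t₁ := le_csInf hBne fun x hx => hx.1
      have hlow : ∀ s, 0 ≤ s → s < t₁ → f1 s ≤ -(c⁻¹/2) := by
        intro s hs0 hst
        by_contra hcon
        push_neg at hcon
        exact absurd (csInf_le hBbd ⟨hs0, hcon⟩) (not_le.mpr hst)
      have hft₁ : f1 t₁ ≤ -(c⁻¹/2) := by
        rcases eq_or_lt_of_le ht₁0 with hzero | hpos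
        · rw [← hzero]; linarith
        · by_contra hcon
          push_neg at hcon
          have hU : IsOpen (f1 ⁻¹' Set.Ioi (-(c⁻¹/2))) := isOpen_Ioi.preimage hcf1
          obtain ⟨ε, hε, hball⟩ := Metric.isOpen_iff.mp hU t₁ hcon
          set s := max 0 (t₁ - ε/2) with hsdef
          have hs0 : 0 ≤ s := le_max_left _ _
          have hst : s < t₁ := max_lt hpos (by linarith)
          have hsb : s ∈ Metric.ball t₁ ε := by
            rw [Metric.mem_ball, Real.dist_eq, abs_of_nonpos (by linarith)]
            have : t₁ - ε/2 ≤ s := le_max_right _ _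
            linarith
          have := hball hsb
          rw [Set.mem_preimage, Set.mem_Ioi] at this
          linarith [hlow s hs0 hst]
      have hicc : ∀ s ∈ Set.Icc (0:ℝ) t₁, f1 s ≤ -(c⁻¹/2) := by
        intro s hs
        rcases lt_or_eq_of_le hs.2 with hlt | heq
        · exact hlow s hs.1 hlt
        · rw [heq]; exact hft₁
      have hkey := key t₁ ht₁0 hicc
      have hV : IsOpen (f1 ⁻¹' Set.Iio (-(c⁻¹/2))) := isOpen_Iio.preimage hcf1
      have ht₁V : t₁ ∈ f1 ⁻¹' Set.Iio (-(c⁻¹/2)) := by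
        rw [Set.mem_preimage, Set.mem_Iio]; linarith
      obtain ⟨ε, hε, hball⟩ := Metric.isOpen_iff.mp hV t₁ ht₁V
      have hlb2 : t₁ + ε/2 ≤ t₁ := by
        rw [ht₁def]
        apply le_csInf hBne
        intro b hb
        by_contra hcon
        push_neg at hcon
        have hbt₁ : t₁ ≤ b := csInf_le hBbd hb
        have hbball : b ∈ Metric.ball t₁ ε := by
          rw [Metric.mem_ball, Real.dist_eq, abs_of_nonneg (by linarith)]
          linarith
        have := hball hbball
        rw [Set.mem_preimage, Set.mem_Iio] at this
        linarith [hb.2]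
      linarith
    have hev2 : ∀ᶠ s in atTop, -(c⁻¹/2) < f1 s :=
      hlim.eventually (eventually_gt_nhds (by linarith))
    obtain ⟨T, hT⟩ := Filter.eventually_atTop.mp hev2
    have h1 := hall (max T 0) (le_max_right _ _)
    have h2 := hT (max T 0) (le_max_left _ _)
    linarith
  · -- Case A : φ is somewhere negative
    push_neg at hcase
    obtain ⟨t₀, ht₀, hφt₀⟩ := hcase
    set h : ℝ → ℝ := fun t => f1 t + (m+2) * (f t)^2 / 2 with hhdef
    have hdh : ∀ t, HasDerivAt h (φ t) t := by
      intro t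
      have H : HasDerivAt h (f2 t + (m+2) * (2 * f t ^ 1 * f1 t) / 2) t :=
        (hdf1 t).add ((((hdf t).pow 2).const_mul (m+2)).div_const 2)
      convert H using 1
      simp [hφdef]; ring
    have hch : Continuous h := by
      exact hcf1.add ((continuous_const.mul (hcf.pow 2)).div_const 2)
    have hψanti : AntitoneOn (fun t => h t - φ t₀ * t) (Set.Ici t₀) := by
      apply antitoneOn_of_deriv_nonpos (convex_Ici t₀)
        (Continuous.continuousOn (by exact hch.sub (continuous_const.mul continuous_id)))
        (fun x _ => ((hdh x).sub ((hasDerivAt_id x).const_mul (φ t₀))).differentiableAt.differentiableWithinAt)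
      intro x hx
      rw [interior_Ici] at hx
      rw [((hdh x).sub ((hasDerivAt_id x).const_mul (φ t₀))).deriv]
      have : φ x ≤ φ t₀ := hφanti (by exact ht₀) (by exact le_trans ht₀ (le_of_lt hx)) (le_of_lt hx)
      linarith
    have hev : ∀ᶠ t in atTop, (-1:ℝ) < f1 t :=
      hlim.eventually (eventually_gt_nhds (by norm_num))
    obtain ⟨T₁, hT₁⟩ := Filter.eventually_atTop.mp hev
    set δ := -φ t₀ with hδdef
    have hδ : 0 < δ := by simp [hδdef]; linarith
    set t := max T₁ (t₀ + (|h t₀ + 1| + 1)/δ) with htdef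
    have hquot : 0 < (|h t₀ + 1| + 1)/δ := by positivity
    have htt₀ : t₀ ≤ t := le_trans (by linarith) (le_max_right _ _)
    have hψ : h t - φ t₀ * t ≤ h t₀ - φ t₀ * t₀ :=
      hψanti (Set.self_mem_Ici) (by exact htt₀) htt₀
    have hlb : -1 < f1 t := hT₁ t (le_max_left _ _)
    have hfsq : 0 ≤ (m+2) * (f t)^2 / 2 := by nlinarith [sq_nonneg (f t)]
    have hge : (|h t₀ + 1| + 1)/δ ≤ t - t₀ := by
      have := le_max_right T₁ (t₀ + (|h t₀ + 1| + 1)/δ)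
      linarith
    have hmul : |h t₀ + 1| + 1 ≤ δ * (t - t₀) := by
      have := (div_le_iff₀ hδ).mp hge
      linarith
    have habs : h t₀ + 1 ≤ |h t₀ + 1| := le_abs_self _
    have hht : h t = f1 t + (m+2) * (f t)^2 / 2 := rfl
    have hφt : φ t₀ * t - φ t₀ * t₀ = -(δ * (t - t₀)) := by rw [hδdef]; ring
    have hA : h t ≤ h t₀ - δ * (t - t₀) := by linarith [hψ, hφt]
    have hB : h t₀ - δ * (t - t₀) ≤ -2 := by linarith [hmul, habs]
    have hC : -1 < h t := by rw [hht]; linarith [hlb, hfsq]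
    linarith
end

section
/- Let -2 < m < -1 and γ < 0. If f solves f''' + (m+2) f f'' - (2m+1)(f')^2 = 0 on [0,∞) with f(0) = -γ, f''(0) = -1, f'(∞) = 0, then f'(0) ≥ -1/((m+2)γ). -/
theorem stmt_12 (m γ : ℝ) (hm₁ : -2 < m) (hm₂ : m < -1) (hγ : γ < 0)
    (f : ℝ → ℝ) (hf : ContDiff ℝ 3 f)
    (hode : ∀ t ≥ (0:ℝ), iteratedDeriv 3 f t + (m + 2) * f t * iteratedDeriv 2 f t
      - (2 * m + 1) * (deriv f t) ^ 2 = 0)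
    (h0 : f 0 = -γ) (h2 : iteratedDeriv 2 f 0 = -1)
    (hlim : Filter.Tendsto (deriv f) Filter.atTop (nhds 0)) :
    deriv f 0 ≥ -1 / ((m + 2) * γ) := by
  by_contra hcon
  push_neg at hcon
  have hm2 : (0:ℝ) < m + 2 := by linarith
  have hmg : (m + 2) * γ < 0 := mul_neg_of_pos_of_neg hm2 hγ
  set c : ℝ := (m + 2) * γ * deriv f 0 + 1 with hc
  have hcpos : 0 < c := by
    have h := (lt_div_iff_of_neg hmg).mp (by simpa using hcon)
    simp only [hc]
    nlinarith [h]
  -- smoothness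
  have h3eq : iteratedDeriv 3 f = deriv (deriv (deriv f)) := by
    simp [iteratedDeriv_succ, iteratedDeriv_one]
  have h2eq : iteratedDeriv 2 f = deriv (deriv f) := by
    simp [iteratedDeriv_succ, iteratedDeriv_one]
  have hC2 : ContDiff ℝ 2 (deriv f) := by
    have h : ContDiff ℝ ((2:ℕ∞)+1) f := by exact_mod_cast hf
    exact (contDiff_succ_iff_deriv.mp h).2.2
  have hC1 : ContDiff ℝ 1 (deriv (deriv f)) := by
    have h : ContDiff ℝ ((1:ℕ∞)+1) (deriv f) := by exact_mod_cast hC2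
    exact (contDiff_succ_iff_deriv.mp h).2.2
  have hd1 : Differentiable ℝ f := hf.differentiable (by norm_num)
  have hd2 : Differentiable ℝ (deriv f) := hC2.differentiable (by norm_num)
  have hd3 : Differentiable ℝ (deriv (deriv f)) := hC1.differentiable (by norm_num)
  -- the function g = f'' + (m+2) f f' is antitone on [0, ∞)
  set g : ℝ → ℝ := fun t => deriv (deriv f) t + (m + 2) * (f t * deriv f t) with hg
  have hgderiv : ∀ t, HasDerivAt g
      (deriv (deriv (deriv f)) t
        + (m + 2) * (deriv f t * deriv f t + f t * deriv (deriv f) t)) t := by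
    intro t
    exact ((hd3 t).hasDerivAt).add
      ((((hd1 t).hasDerivAt).mul ((hd2 t).hasDerivAt)).const_mul (m + 2))
  have hganti : AntitoneOn g (Set.Ici 0) := by
    apply antitoneOn_of_deriv_nonpos (convex_Ici 0)
    · exact fun t _ => ((hgderiv t).continuousAt).continuousWithinAt
    · intro t ht
      exact ((hgderiv t).differentiableAt).differentiableWithinAt
    · intro t ht
      rw [interior_Ici] at ht
      have htode := hode t (le_of_lt ht)
      rw [h3eq, h2eq] at htode
      rw [(hgderiv t).deriv]
      nlinarith [sq_nonneg (deriv f t)]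
  have hgle : ∀ t ≥ (0:ℝ), g t ≤ -c := by
    intro t ht
    have h1 : g t ≤ g 0 := hganti Set.self_mem_Ici ht ht
    have hg0 : g 0 = -c := by
      have hd20 : deriv (deriv f) 0 = -1 := by rw [← h2eq]; exact h2
      simp only [hg, hd20, h0, hc]
      ring
    linarith
  -- the function Φ = f' + (m+2)/2 f² + c t is antitone on [0, ∞)
  set Φ : ℝ → ℝ := fun t => deriv f t + (m + 2) / 2 * (f t) ^ 2 + c * t with hΦ
  have hΦderiv : ∀ t, HasDerivAt Φ (g t + c) t := by
    intro t
    have ha : HasDerivAt (fun t => (f t) ^ 2) (2 * f t ^ 1 * deriv f t) t :=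
      ((hd1 t).hasDerivAt).pow 2
    have hb : HasDerivAt (fun t : ℝ => c * t) (c * 1) t :=
      (hasDerivAt_id t).const_mul c
    have := (((hd2 t).hasDerivAt).add (ha.const_mul ((m + 2) / 2))).add hb
    refine this.congr_deriv ?_
    simp only [hg]
    ring
  have hΦanti : AntitoneOn Φ (Set.Ici 0) := by
    apply antitoneOn_of_deriv_nonpos (convex_Ici 0)
    · exact fun t _ => ((hΦderiv t).continuousAt).continuousWithinAt
    · intro t ht
      exact ((hΦderiv t).differentiableAt).differentiableWithinAt
    · intro t ht
      rw [interior_Ici] at ht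
      rw [(hΦderiv t).deriv]
      have := hgle t (le_of_lt ht)
      linarith
  have key : ∀ s ≥ (0:ℝ), deriv f s + (m + 2) / 2 * (f s) ^ 2 + c * s
      ≤ deriv f 0 + (m + 2) / 2 * γ ^ 2 := by
    intro s hs
    have h1 : Φ s ≤ Φ 0 := hΦanti Set.self_mem_Ici hs hs
    simp only [hΦ, h0, mul_zero] at h1
    nlinarith [h1]
  -- contradiction with f' → 0
  have hev : ∀ᶠ t in Filter.atTop, -1 < deriv f t :=
    hlim.eventually (eventually_gt_nhds (by norm_num : (-1:ℝ) < 0))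
  obtain ⟨t, ht1, ht2⟩ :=
    (hev.and (Filter.eventually_ge_atTop
      (max 0 ((deriv f 0 + (m + 2) / 2 * γ ^ 2 + 1) / c) + 1))).exists
  have hmax : (deriv f 0 + (m + 2) / 2 * γ ^ 2 + 1) / c
      ≤ max 0 ((deriv f 0 + (m + 2) / 2 * γ ^ 2 + 1) / c) := le_max_right _ _
  have hmax0 : (0:ℝ) ≤ max 0 ((deriv f 0 + (m + 2) / 2 * γ ^ 2 + 1) / c) := le_max_left _ _
  have htpos : (0:ℝ) ≤ t := by linarith
  have hkey := key t htpos
  have hsq : 0 ≤ (m + 2) / 2 * (f t) ^ 2 := by positivity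
  have hct : deriv f 0 + (m + 2) / 2 * γ ^ 2 + 1 ≤ c * (t - 1) := by
    have hdivT : (deriv f 0 + (m + 2) / 2 * γ ^ 2 + 1) / c ≤ t - 1 := by linarith
    exact (div_le_iff₀' hcpos).mp hdivT
  nlinarith [ht1, hkey, hsq, hcpos]
end

section
/- For m = -1, if f solves f''' + f f'' + (f')² = 0 on [0,∞) with f(0) = -γ, f''(0) = -1 and f'(∞) = 0, then γ < 0 and f'(0) ≥ -1/γ. Moreover f satisfies the Riccati equation f'(t) + f(t)²/2 = ct + d with c = -1 - γ f'(0) and d = f'(0) + γ²/2. -/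
theorem stmt_13 (γ : ℝ)
    (f : ℝ → ℝ) (hf : ContDiff ℝ 3 f)
    (hode : ∀ t ≥ (0:ℝ), iteratedDeriv 3 f t + f t * iteratedDeriv 2 f t
      + (deriv f t) ^ 2 = 0)
    (h0 : f 0 = -γ) (h2 : iteratedDeriv 2 f 0 = -1)
    (hlim : Filter.Tendsto (deriv f) Filter.atTop (nhds 0)) :
    γ < 0 ∧ deriv f 0 ≥ -1 / γ ∧
      ∀ t ≥ (0:ℝ), deriv f t + (f t) ^ 2 / 2
        = (-1 - γ * deriv f 0) * t + (deriv f 0 + γ ^ 2 / 2) := by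
  -- differentiability facts
  have hfn : ContDiff ℝ ((1:ℕ) + (2:ℕ) : ℕ) f := by exact_mod_cast hf
  have hfn1 : ContDiff ℝ ((1:ℕ) + (1:ℕ) : ℕ) f := by exact_mod_cast hf.of_le (by norm_num)
  have hC2 : ContDiff ℝ 1 (deriv (deriv f)) := by
    simpa [Function.iterate_succ, Function.comp] using ContDiff.iterate_deriv' 1 2 hfn
  have hd1 : Differentiable ℝ f := hf.differentiable (by norm_num)
  have hd2 : Differentiable ℝ (deriv f) := by
    simpa using (ContDiff.iterate_deriv' 1 1 hfn1).differentiable (by norm_num)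
  have hd3 : Differentiable ℝ (deriv (deriv f)) := hC2.differentiable (by norm_num)
  -- iterated derivative rewrites
  have hIt2 : iteratedDeriv 2 f = deriv (deriv f) := by
    simp [show (2:ℕ) = 1 + 1 from rfl, iteratedDeriv_succ, iteratedDeriv_one]
  have hIt3 : iteratedDeriv 3 f = deriv (deriv (deriv f)) := by
    simp [show (3:ℕ) = 2 + 1 from rfl, iteratedDeriv_succ, hIt2]
  have hode' : ∀ t ≥ (0:ℝ), deriv (deriv (deriv f)) t
      = -(f t * deriv (deriv f) t + (deriv f t)^2) := by
    intro t ht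
    have := hode t ht
    rw [hIt2, hIt3] at this
    linarith
  set p := deriv f 0 with hp
  set c : ℝ := -1 - γ * p with hc
  set d : ℝ := p + γ^2/2 with hd
  -- the function h = f'' + f f' is constant (= c) on [0,∞)
  set h : ℝ → ℝ := fun t => deriv (deriv f) t + f t * deriv f t with hhdef
  have hh : ∀ t : ℝ, HasDerivAt h
      (deriv (deriv (deriv f)) t + (deriv f t * deriv f t + f t * deriv (deriv f) t)) t :=
    fun t => ((hd3 t).hasDerivAt).add (((hd1 t).hasDerivAt).mul ((hd2 t).hasDerivAt))
  have hhc : Continuous h :=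
    (hd3.continuous).add ((hd1.continuous).mul (hd2.continuous))
  have hh0 : ∀ x ≥ (0:ℝ), HasDerivAt h 0 x := by
    intro x hx
    have H := hh x
    rw [hode' x hx] at H
    convert H using 1
    ring
  have hconst : ∀ t ≥ (0:ℝ), h t = h 0 := by
    intro b hb
    exact constant_of_has_deriv_right_zero (hhc.continuousOn)
      (fun x hx => (hh0 x hx.1).hasDerivWithinAt) b ⟨hb, le_rfl⟩
  have h0val : h 0 = c := by
    have e2 : deriv (deriv f) 0 = -1 := by rw [← hIt2]; exact h2
    simp only [hhdef, e2, h0, hc, ← hp]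
    ring
  -- Riccati equation
  have hric : ∀ t ≥ (0:ℝ), deriv f t + (f t)^2/2 = c * t + d := by
    have hG : ∀ t : ℝ, HasDerivAt (fun t => deriv f t + (f t)^2/2 - (c * t + d))
        (h t - c) t := by
      intro t
      have h1 : HasDerivAt (fun t => deriv f t) (deriv (deriv f) t) t := (hd2 t).hasDerivAt
      have h2' : HasDerivAt (fun t => (f t)^2/2) ((2 * f t ^ 1 * deriv f t)/2) t :=
        (((hd1 t).hasDerivAt).pow 2).div_const 2
      have h3 : HasDerivAt (fun t : ℝ => c * t + d) c t := by
        simpa using ((hasDerivAt_id t).const_mul c).add_const d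
      have := (h1.add h2').sub h3
      refine this.congr_deriv ?_
      show _ = deriv (deriv f) t + f t * deriv f t - c
      ring
    have hGc : Continuous (fun t => deriv f t + (f t)^2/2 - (c * t + d)) := by
      exact (hd2.continuous.add ((hd1.continuous.pow 2).div_const 2)).sub ((continuous_const.mul continuous_id).add continuous_const)
    have hzero : ∀ t ≥ (0:ℝ), (fun t => deriv f t + (f t)^2/2 - (c * t + d)) t = 0 := by
      intro b hb
      have hb0 : (fun t => deriv f t + (f t)^2/2 - (c * t + d)) 0 = 0 := by
        simp [h0, hd, ← hp]
      have := constant_of_has_deriv_right_zero (f := fun t => deriv f t + (f t)^2/2 - (c * t + d))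
        (hGc.continuousOn (s := Set.Icc 0 b))
        (fun x hx => by
          have := hG x
          rw [hconst x hx.1, h0val] at this
          simpa using this.hasDerivWithinAt) b ⟨hb, le_rfl⟩
      show deriv f b + f b ^ 2 / 2 - (c * b + d) = 0
      rw [this]
      exact hb0
    intro t ht
    have := hzero t ht
    simp only at this
    linarith
  -- c ≥ 0
  have hcnn : 0 ≤ c := by
    by_contra hcneg
    push_neg at hcneg
    set t₀ : ℝ := (-1 - d)/c + 1 with ht₀
    have hcne : c ≠ 0 := ne_of_lt hcneg
    obtain ⟨t, hgt, ht₀t, ht0⟩ :=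
      ((hlim.eventually (eventually_gt_nhds (by norm_num : (-1:ℝ) < 0))).and
        ((Filter.eventually_ge_atTop t₀).and (Filter.eventually_ge_atTop 0))).exists
    have hric' := hric t ht0
    have hmul : c * t ≤ c * t₀ := mul_le_mul_of_nonpos_left ht₀t hcneg.le
    have hcd : c * ((-1 - d)/c) = -1 - d := mul_div_cancel₀ _ hcne
    have hct₀ : c * t₀ = -1 - d + c := by rw [ht₀, mul_add, hcd]; ring
    have hsq : 0 ≤ (f t)^2 := sq_nonneg _
    clear_value t₀ c d p
    have e1 : deriv f t ≤ c * t + d := by linarith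
    have e2' : c * t + d ≤ c * t₀ + d := by linarith
    linarith
  -- f'' < 0 on [0,∞)
  have hc1 : Continuous f := hd1.continuous
  set F : ℝ → ℝ := fun t => ∫ s in (0:ℝ)..t, f s with hF
  have hFd : ∀ t : ℝ, HasDerivAt F (f t) t := by
    intro t
    exact (hc1.integral_hasStrictDerivAt 0 t).hasDerivAt
  have hFc : Continuous F := by
    have : Differentiable ℝ F := fun t => (hFd t).differentiableAt
    exact this.continuous
  set E : ℝ → ℝ := fun t => Real.exp (F t) * deriv (deriv f) t with hE
  have hEd : ∀ t : ℝ, HasDerivAt E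
      (Real.exp (F t) * f t * deriv (deriv f) t + Real.exp (F t) * deriv (deriv (deriv f)) t) t := by
    intro t
    exact ((hFd t).exp).mul ((hd3 t).hasDerivAt)
  have hEc : Continuous E := ((Real.continuous_exp.comp hFc).mul hd3.continuous)
  have hanti : AntitoneOn E (Set.Ici 0) := by
    apply antitoneOn_of_deriv_nonpos (convex_Ici 0) hEc.continuousOn
      (fun x _ => ((hEd x).differentiableAt).differentiableWithinAt)
    intro x hx
    rw [interior_Ici] at hx
    have hx0 : (0:ℝ) ≤ x := le_of_lt hx
    rw [(hEd x).deriv, hode' x hx0]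
    nlinarith [Real.exp_pos (F x), sq_nonneg (deriv f x), sq_nonneg (f x * deriv (deriv f) x),
      mul_nonneg (Real.exp_pos (F x)).le (sq_nonneg (deriv f x))]
  -- hence f'' < 0 on [0,∞)
  have hf2neg : ∀ t ≥ (0:ℝ), deriv (deriv f) t < 0 := by
    intro t ht
    have hE0 : E 0 = -1 := by
      have : F 0 = 0 := by simp [hF]
      have e2 : deriv (deriv f) 0 = -1 := by rw [← hIt2]; exact h2
      simp [hE, this, e2]
    have hle : E t ≤ E 0 := hanti (Set.self_mem_Ici) ht ht
    rw [hE0] at hle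
    simp only [hE] at hle
    have hexp : 0 < Real.exp (F t) := Real.exp_pos _
    by_contra hge
    push_neg at hge
    have := mul_nonneg hexp.le hge
    linarith
  -- f' is strictly positive on [0,∞)
  have hmono : AntitoneOn (deriv f) (Set.Ici 0) := by
    apply antitoneOn_of_deriv_nonpos (convex_Ici 0) hd2.continuous.continuousOn
      (fun x _ => (hd2 x).differentiableWithinAt)
    intro x hx
    rw [interior_Ici] at hx
    exact (hf2neg x (le_of_lt hx)).le
  have hdpos : ∀ t ≥ (0:ℝ), 0 < deriv f t := by
    intro t ht
    by_contra hle
    push_neg at hle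
    have hstep : deriv f (t+1) < deriv f t := by
      have := strictAntiOn_of_deriv_neg (convex_Ici 0) hd2.continuous.continuousOn
        (fun x hx => hf2neg x (le_of_lt (by rwa [interior_Ici] at hx)))
      exact this ht (by simp; linarith) (lt_add_one t)
    have hneg : deriv f (t+1) < 0 := lt_of_lt_of_le hstep hle
    have hev : ∀ᶠ s in Filter.atTop, deriv f s ≤ deriv f (t+1) := by
      filter_upwards [Filter.eventually_ge_atTop (t+1)] with s hs
      exact hmono (by simp; linarith) (by simp; linarith [hs]) hs
    have := le_of_tendsto hlim hev
    linarith
  -- conclude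
  have hp0 : 0 < p := hdpos 0 le_rfl
  have hγp : γ * p ≤ -1 := by rw [hc] at hcnn; linarith
  have hγ : γ < 0 := by nlinarith
  refine ⟨hγ, ?_, ?_⟩
  · rw [ge_iff_le, div_le_iff_of_neg hγ]
    linarith [hγp, mul_comm γ p]
  · intro t ht
    have := hric t ht
    rw [hc, hd, hp] at this
    linarith
end

section
/- Let γ < 0 and d = -1/γ + γ²/2. Then the explicit function f(t) = 2√(2d) / (((γ - √(2d))/(γ + √(2d))) e^{√(2d) t} - 1) + √(2d) satisfies f''' + f f'' + (f')² = 0 on [0,∞), with f(0) = -γ, f'(0) = -1/γ, f''(0) = -1, and f'(t) → 0 as t → ∞; moreover f is bounded. -/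
open Real Filter

private lemma hu_deriv (s a t : ℝ) :
    HasDerivAt (fun t : ℝ => a * Real.exp (s * t)) (s * (a * Real.exp (s * t))) t := by
  have h1 : HasDerivAt (fun t : ℝ => s * t) s t := by
    simpa using (hasDerivAt_id t).const_mul s
  have := h1.exp.const_mul a
  refine this.congr_deriv ?_
  ring

private lemma hD_deriv (s a t : ℝ) :
    HasDerivAt (fun t : ℝ => a * Real.exp (s * t) - 1) (s * (a * Real.exp (s * t))) t :=
  (hu_deriv s a t).sub_const 1

private lemma f_deriv (s a t : ℝ) (h : a * Real.exp (s * t) - 1 ≠ 0) :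
    HasDerivAt (fun t : ℝ => 2 * s / (a * Real.exp (s * t) - 1) + s)
      (-(2 * s ^ 2) * (a * Real.exp (s * t)) / (a * Real.exp (s * t) - 1) ^ 2) t := by
  have := ((hasDerivAt_const t (2 * s)).div (hD_deriv s a t) h).add_const s
  refine this.congr_deriv ?_
  ring

private lemma g1_deriv (s a t : ℝ) (h : a * Real.exp (s * t) - 1 ≠ 0) :
    HasDerivAt (fun t : ℝ =>
        -(2 * s ^ 2) * (a * Real.exp (s * t)) / (a * Real.exp (s * t) - 1) ^ 2)
      (2 * s ^ 3 * ((a * Real.exp (s * t)) * (a * Real.exp (s * t) + 1)) /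
        (a * Real.exp (s * t) - 1) ^ 3) t := by
  have hu := hu_deriv s a t
  have hN : HasDerivAt (fun t : ℝ => -(2 * s ^ 2) * (a * Real.exp (s * t)))
      (-(2 * s ^ 2) * (s * (a * Real.exp (s * t)))) t := hu.const_mul _
  have hD2 : HasDerivAt (fun t : ℝ => (a * Real.exp (s * t) - 1) ^ 2)
      ((2 : ℕ) * (a * Real.exp (s * t) - 1) ^ 1 * (s * (a * Real.exp (s * t)))) t :=
    (hD_deriv s a t).pow 2
  have := hN.div hD2 (pow_ne_zero 2 h)
  refine this.congr_deriv ?_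
  field_simp
  ring

private lemma g2_deriv (s a t : ℝ) (h : a * Real.exp (s * t) - 1 ≠ 0) :
    HasDerivAt (fun t : ℝ =>
        2 * s ^ 3 * ((a * Real.exp (s * t)) * (a * Real.exp (s * t) + 1)) /
          (a * Real.exp (s * t) - 1) ^ 3)
      (-(2 * s ^ 4) * ((a * Real.exp (s * t)) *
          ((a * Real.exp (s * t)) ^ 2 + 4 * (a * Real.exp (s * t)) + 1)) /
        (a * Real.exp (s * t) - 1) ^ 4) t := by
  have hu := hu_deriv s a t
  have hN : HasDerivAt
      (fun t : ℝ => 2 * s ^ 3 * ((a * Real.exp (s * t)) * (a * Real.exp (s * t) + 1)))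
      (2 * s ^ 3 * (s * (a * Real.exp (s * t)) * (a * Real.exp (s * t) + 1) +
        (a * Real.exp (s * t)) * (s * (a * Real.exp (s * t))))) t :=
    (hu.mul (hu.add_const 1)).const_mul _
  have hD3 : HasDerivAt (fun t : ℝ => (a * Real.exp (s * t) - 1) ^ 3)
      ((3 : ℕ) * (a * Real.exp (s * t) - 1) ^ 2 * (s * (a * Real.exp (s * t)))) t :=
    (hD_deriv s a t).pow 3
  have := hN.div hD3 (pow_ne_zero 3 h)
  refine this.congr_deriv ?_
  field_simp
  ring

theorem stmt_14 (γ : ℝ) (hγ : γ < 0) (d : ℝ) (hd : d = -1/γ + γ ^ 2 / 2)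
    (f : ℝ → ℝ)
    (hfdef : ∀ t : ℝ, f t = 2 * Real.sqrt (2 * d) /
      (((γ - Real.sqrt (2 * d)) / (γ + Real.sqrt (2 * d))) * Real.exp (Real.sqrt (2 * d) * t) - 1)
      + Real.sqrt (2 * d)) :
    (∀ t ≥ (0:ℝ), iteratedDeriv 3 f t + f t * iteratedDeriv 2 f t + (deriv f t) ^ 2 = 0) ∧
    f 0 = -γ ∧ deriv f 0 = -1/γ ∧ iteratedDeriv 2 f 0 = -1 ∧
    Filter.Tendsto (deriv f) Filter.atTop (nhds 0) ∧
    ∃ C : ℝ, ∀ t ≥ (0:ℝ), |f t| ≤ C := by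
  have hγ' : γ ≠ 0 := ne_of_lt hγ
  have hinv : (0:ℝ) < -2 / γ := div_pos_of_neg_of_neg (by norm_num) hγ
  have h2d : 0 < 2 * d := by
    have hh : -2 / γ = 2 * (-1 / γ) := by ring
    rw [hd]; nlinarith [sq_nonneg γ, hinv, hh]
  set s := Real.sqrt (2 * d) with hsdef
  have hs : 0 < s := Real.sqrt_pos.2 h2d
  have hs2 : s ^ 2 = 2 * d := Real.sq_sqrt h2d.le
  have hs2' : s ^ 2 = -2 / γ + γ ^ 2 := by rw [hs2, hd]; ring
  have hγs : 0 < γ + s := by nlinarith [hs, hinv, sq_nonneg (s + γ)]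
  set a := (γ - s) / (γ + s) with hadef
  have ha : a < 0 := div_neg_of_neg_of_pos (by linarith) hγs
  have hDle : ∀ t : ℝ, a * Real.exp (s * t) - 1 ≤ -1 := by
    intro t
    nlinarith [Real.exp_pos (s * t), mul_neg_of_neg_of_pos ha (Real.exp_pos (s * t))]
  have hD0 : ∀ t : ℝ, a * Real.exp (s * t) - 1 ≠ 0 := fun t =>
    ne_of_lt (lt_of_le_of_lt (hDle t) (by norm_num))
  have hfeq : f = fun t : ℝ => 2 * s / (a * Real.exp (s * t) - 1) + s := funext hfdef
  -- deriv f = g1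
  have hdf : deriv f = fun t : ℝ =>
      -(2 * s ^ 2) * (a * Real.exp (s * t)) / (a * Real.exp (s * t) - 1) ^ 2 := by
    funext t
    rw [hfeq]
    exact (f_deriv s a t (hD0 t)).deriv
  have hdf2 : iteratedDeriv 2 f = fun t : ℝ =>
      2 * s ^ 3 * ((a * Real.exp (s * t)) * (a * Real.exp (s * t) + 1)) /
        (a * Real.exp (s * t) - 1) ^ 3 := by
    rw [iteratedDeriv_succ, iteratedDeriv_one, hdf]
    funext t
    exact (g1_deriv s a t (hD0 t)).deriv
  have hdf3 : iteratedDeriv 3 f = fun t : ℝ =>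
      -(2 * s ^ 4) * ((a * Real.exp (s * t)) *
          ((a * Real.exp (s * t)) ^ 2 + 4 * (a * Real.exp (s * t)) + 1)) /
        (a * Real.exp (s * t) - 1) ^ 4 := by
    rw [iteratedDeriv_succ, hdf2]
    funext t
    exact (g2_deriv s a t (hD0 t)).deriv
  refine ⟨?_, ?_, ?_, ?_, ?_, ?_⟩
  · -- ODE
    intro t _
    rw [hdf, hdf2, hdf3, hfdef t]
    have h := hD0 t
    field_simp
    ring
  · -- f 0 = -γ
    have h0 : a - 1 < 0 := by linarith
    rw [hfdef 0, mul_zero, Real.exp_zero, mul_one]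
    have : 2 * s / (a - 1) = -γ - s := by
      rw [div_eq_iff (ne_of_lt h0), hadef]
      field_simp
      ring
    rw [this]; ring
  · -- deriv f 0 = -1/γ
    rw [hdf]
    simp only [mul_zero, Real.exp_zero, mul_one]
    have ha1 : a - 1 = -(2 * s) / (γ + s) := by
      rw [hadef]; field_simp; ring
    have : -(2 * s ^ 2) * a / (a - 1) ^ 2 = (s ^ 2 - γ ^ 2) / 2 := by
      rw [ha1, hadef]
      field_simp
      ring
    rw [this, hs2']
    field_simp
    ring
  · -- iteratedDeriv 2 f 0 = -1
    rw [hdf2]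
    simp only [mul_zero, Real.exp_zero, mul_one]
    have ha1 : a - 1 = -(2 * s) / (γ + s) := by
      rw [hadef]; field_simp; ring
    have : 2 * s ^ 3 * (a * (a + 1)) / (a - 1) ^ 3 = γ * (s ^ 2 - γ ^ 2) / 2 := by
      rw [ha1, hadef]
      field_simp
      ring
    rw [this, hs2']
    field_simp
    ring
  · -- tendsto
    rw [hdf]
    have h1 : Tendsto (fun t : ℝ => (Real.exp (s * t))⁻¹) atTop (nhds 0) := by
      apply Filter.Tendsto.inv_tendsto_atTop
      exact Real.tendsto_exp_atTop.comp (Filter.Tendsto.const_mul_atTop hs tendsto_id)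
    have h2 : ContinuousAt (fun x : ℝ => -(2 * s ^ 2) * (a * x) / (a - x) ^ 2) 0 := by
      apply ContinuousAt.div
      · fun_prop
      · fun_prop
      · simpa using pow_ne_zero 2 ha.ne
    have h3 : Tendsto (fun t : ℝ =>
        -(2 * s ^ 2) * (a * (Real.exp (s * t))⁻¹) / (a - (Real.exp (s * t))⁻¹) ^ 2)
        atTop (nhds 0) := by
      have := h2.tendsto.comp h1
      simpa [Function.comp_def] using this
    refine h3.congr (fun t => ?_)
    have he : Real.exp (s * t) ≠ 0 := (Real.exp_pos _).ne'
    have h := hD0 t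
    have hne : a - (Real.exp (s * t))⁻¹ ≠ 0 := by
      have : (0:ℝ) < (Real.exp (s * t))⁻¹ := by positivity
      exact ne_of_lt (by linarith)
    field_simp
  · -- bounded
    refine ⟨3 * s, fun t _ => ?_⟩
    rw [hfdef t]
    have h1 : |2 * s / (a * Real.exp (s * t) - 1)| ≤ 2 * s := by
      rw [abs_div, abs_of_nonneg (by positivity)]
      apply div_le_self (by positivity)
      have := hDle t
      rw [abs_of_nonpos (by linarith)]
      linarith
    calc |2 * s / (a * Real.exp (s * t) - 1) + s|
        ≤ |2 * s / (a * Real.exp (s * t) - 1)| + |s| := abs_add_le _ _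
      _ ≤ 2 * s + s := by rw [abs_of_pos hs]; exact add_le_add_left h1 _
      _ = 3 * s := by ring
end

section
/- Let m = -1, γ < 0, and let f be an unbounded solution on [0,∞) of f''' + f f'' + (f')² = 0 with f(0) = -γ, f''(0) = -1, f'(∞) = 0. Then f(t)f'(t) → -(1 + γ f'(0)) as t → ∞, and consequently f(t) ~ √(-2(1+γf'(0))) · √t as t → ∞. -/
open Filter Real Set

private lemma constOn_Ici {g : ℝ → ℝ} (hg : Differentiable ℝ g)
    (h : ∀ t > (0:ℝ), deriv g t = 0) : ∀ t ≥ (0:ℝ), g t = g 0 := by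
  intro t ht
  have hmono : MonotoneOn g (Set.Ici 0) :=
    monotoneOn_of_deriv_nonneg (convex_Ici 0) hg.continuous.continuousOn
      (hg.differentiableOn) (fun x hx => by
        rw [interior_Ici] at hx; rw [h x hx])
  have hanti : AntitoneOn g (Set.Ici 0) :=
    antitoneOn_of_deriv_nonpos (convex_Ici 0) hg.continuous.continuousOn
      (hg.differentiableOn) (fun x hx => by
        rw [interior_Ici] at hx; rw [h x hx])
  exact le_antisymm (hanti Set.self_mem_Ici ht ht) (hmono Set.self_mem_Ici ht ht)

theorem stmt_15 (γ : ℝ) (hγ : γ < 0)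
    (f : ℝ → ℝ) (hf : ContDiff ℝ 3 f)
    (hode : ∀ t ≥ (0:ℝ), iteratedDeriv 3 f t + f t * iteratedDeriv 2 f t
      + (deriv f t) ^ 2 = 0)
    (h0 : f 0 = -γ) (h2 : iteratedDeriv 2 f 0 = -1)
    (hlim : Filter.Tendsto (deriv f) Filter.atTop (nhds 0))
    (hunb : Filter.Tendsto f Filter.atTop Filter.atTop) :
    Filter.Tendsto (fun t => f t * deriv f t) Filter.atTop (nhds (-(1 + γ * deriv f 0))) ∧
    Filter.Tendsto (fun t => f t / Real.sqrt t) Filter.atTop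
      (nhds (Real.sqrt (-2 * (1 + γ * deriv f 0)))) := by
  classical
  set d1 := deriv f with hd1def
  set d2 := deriv d1 with hd2def
  set d3 := deriv d2 with hd3def
  -- smoothness
  have hc2 : ContDiff ℝ 2 d1 := by
    have h : ContDiff ℝ (2+1) f := by exact_mod_cast hf
    exact (contDiff_succ_iff_deriv.mp h).2.2
  have hc1 : ContDiff ℝ 1 d2 := by
    have h : ContDiff ℝ (1+1) d1 := by exact_mod_cast hc2
    exact (contDiff_succ_iff_deriv.mp h).2.2
  have hfd : Differentiable ℝ f := hf.differentiable (by norm_num)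
  have h1d : Differentiable ℝ d1 := hc2.differentiable (by norm_num)
  have h2d : Differentiable ℝ d2 := hc1.differentiable (by norm_num)
  have h3c : Continuous d3 := hc1.continuous_deriv le_rfl
  have h2c : Continuous d2 := h2d.continuous
  have h1c : Continuous d1 := h1d.continuous
  have hfc : Continuous f := hfd.continuous
  -- rewrite iterated derivatives
  have hit2 : iteratedDeriv 2 f = d2 := by
    rw [show (2:ℕ) = 1+1 from rfl, iteratedDeriv_succ, iteratedDeriv_one]
  have hit3 : iteratedDeriv 3 f = d3 := by
    rw [show (3:ℕ) = 2+1 from rfl, iteratedDeriv_succ, hit2]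
  rw [hit2] at h2
  have hode' : ∀ t ≥ (0:ℝ), d3 t + f t * d2 t + (d1 t)^2 = 0 := by
    intro t ht; have := hode t ht; rw [hit2, hit3] at this; exact this
  -- the conserved quantity
  set C : ℝ := -1 - γ * d1 0 with hCdef
  have hC : ∀ t ≥ (0:ℝ), d2 t + f t * d1 t = C := by
    have hg : Differentiable ℝ (fun t => d2 t + f t * d1 t) :=
      h2d.add (hfd.mul h1d)
    have hgz : ∀ t > (0:ℝ), deriv (fun t => d2 t + f t * d1 t) t = 0 := by
      intro t ht
      have hder : HasDerivAt (fun t => d2 t + f t * d1 t)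
          (d3 t + (d1 t * d1 t + f t * d2 t)) t :=
        (h2d t).hasDerivAt.add (((hfd t).hasDerivAt.mul (h1d t).hasDerivAt))
      rw [hder.deriv]
      have := hode' t (le_of_lt ht)
      nlinarith [this]
    have := constOn_Ici hg hgz
    intro t ht
    have h := this t ht
    rw [h, h2, h0]
    ring
  -- F = primitive of f, and d2 < 0 on [0,∞)
  set F : ℝ → ℝ := fun t => ∫ s in (0:ℝ)..t, f s with hFdef
  have hF : ∀ t, HasDerivAt F (f t) t := fun t =>
    (hfc.integral_hasStrictDerivAt 0 t).hasDerivAt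
  have hF0 : F 0 = 0 := intervalIntegral.integral_same
  have hd2neg : ∀ t ≥ (0:ℝ), d2 t < 0 := by
    have hψd : ∀ t, HasDerivAt (fun t => d2 t * Real.exp (F t))
        (d3 t * Real.exp (F t) + d2 t * (Real.exp (F t) * f t)) t := fun t =>
      (h2d t).hasDerivAt.mul ((hF t).exp)
    have hψanti : AntitoneOn (fun t => d2 t * Real.exp (F t)) (Set.Ici 0) := by
      apply antitoneOn_of_deriv_nonpos (convex_Ici 0)
      · exact (h2c.mul (Real.continuous_exp.comp
          (by exact (fun t => (hF t).differentiableAt) : Differentiable ℝ F).continuous)).continuousOn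
      · intro x hx
        exact ((h2d x).hasDerivAt.mul ((hF x).exp)).differentiableAt.differentiableWithinAt
      · intro x hx
        rw [interior_Ici] at hx
        rw [(hψd x).deriv]
        have hode'' := hode' x (le_of_lt hx)
        have : d3 x * Real.exp (F x) + d2 x * (Real.exp (F x) * f x)
            = -(d1 x)^2 * Real.exp (F x) := by
          linear_combination Real.exp (F x) * hode''
        rw [this]
        have := Real.exp_pos (F x)
        nlinarith [sq_nonneg (d1 x)]
    intro t ht
    have h1 : d2 t * Real.exp (F t) ≤ d2 0 * Real.exp (F 0) :=
      hψanti Set.self_mem_Ici ht ht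
    rw [h2, hF0, Real.exp_zero] at h1
    have hep := Real.exp_pos (F t)
    nlinarith
  -- d1 > 0 on [0,∞)
  have hd1anti : StrictAntiOn d1 (Set.Ici 0) := by
    apply strictAntiOn_of_deriv_neg (convex_Ici 0) h1c.continuousOn
    intro x hx
    rw [interior_Ici] at hx
    exact hd2neg x (le_of_lt hx)
  have hd1pos : ∀ t ≥ (0:ℝ), 0 < d1 t := by
    intro t ht
    by_contra hle
    push_neg at hle
    have h1 : d1 (t+1) < d1 t := hd1anti ht (by linarith [ht] : (0:ℝ) ≤ t+1) (by linarith)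
    have h2' : (0:ℝ) ≤ d1 (t+1) := by
      apply le_of_tendsto hlim
      filter_upwards [eventually_ge_atTop (t+1)] with s hs
      rcases eq_or_lt_of_le hs with h | h
      · rw [← h]
      · exact le_of_lt (hd1anti (Set.mem_Ici.mpr (by linarith)) (Set.mem_Ici.mpr (by linarith)) h)
    linarith
  -- barrier argument : d2 → 0
  have hbar : ∀ ε > (0:ℝ), ∀ᶠ t in atTop, -ε ≤ d2 t := by
    intro ε hε
    -- find T
    have hev : ∀ᶠ t in atTop, 1 ≤ f t ∧ (d1 t)^2 < ε ∧ 0 ≤ t := by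
      have h1 : ∀ᶠ t in atTop, 1 ≤ f t := hunb.eventually_ge_atTop 1
      have h2' : ∀ᶠ t in atTop, (d1 t)^2 < ε := by
        have hsq : Tendsto (fun t => (d1 t)^2) atTop (nhds 0) := by
          have := hlim.pow 2
          simpa using this
        exact hsq.eventually (gt_mem_nhds hε)
      filter_upwards [h1, h2', eventually_ge_atTop (0:ℝ)] with t a b c
      exact ⟨a, b, c⟩
    obtain ⟨T, hT⟩ := eventually_atTop.mp hev
    have hT0 : (0:ℝ) ≤ T := by
      rcases hT T le_rfl with ⟨_, _, h⟩; exact h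
    have hf3pos : ∀ x ≥ T, d2 x < -ε → 0 < d3 x := by
      intro x hx hd2x
      obtain ⟨ha, hb, hc0⟩ := hT x hx
      have hode'' := hode' x hc0
      nlinarith
    -- ∃ t₂ ≥ T with -ε ≤ d2 t₂
    have ht2 : ∃ t₂ ≥ T, -ε ≤ d2 t₂ := by
      by_contra hcon
      push_neg at hcon
      have hanti : AntitoneOn (fun t => d1 t + ε * t) (Set.Ici T) := by
        apply antitoneOn_of_deriv_nonpos (convex_Ici T)
        · exact (h1c.add (continuous_const.mul continuous_id)).continuousOn
        · intro x hx
          exact ((h1d x).add ((differentiable_const ε).mul differentiable_id x)).differentiableWithinAt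
        · intro x hx
          rw [interior_Ici] at hx
          have hder : HasDerivAt (fun t => d1 t + ε * t) (d2 x + ε * 1) x :=
            (h1d x).hasDerivAt.add ((hasDerivAt_id x).const_mul ε)
          rw [hder.deriv]
          have := hcon x (le_of_lt hx)
          linarith
      have hpos : 0 < (d1 T + 1)/ε := div_pos (by linarith [hd1pos T hT0]) hε
      have ht'ge : T ≤ T + (d1 T + 1)/ε := by linarith
      have h1 : d1 (T + (d1 T + 1)/ε) + ε * (T + (d1 T + 1)/ε) ≤ d1 T + ε * T :=
        hanti Set.self_mem_Ici ht'ge ht'ge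
      have h2' : ε * (T + (d1 T + 1)/ε) = ε * T + (d1 T + 1) := by
        field_simp
      have h3' : d1 (T + (d1 T + 1)/ε) ≤ -1 := by linarith
      have := hd1pos (T + (d1 T + 1)/ε) (le_trans hT0 ht'ge)
      linarith
    obtain ⟨t₂, ht₂T, ht₂⟩ := ht2
    rw [eventually_atTop]
    refine ⟨t₂, fun t₁ ht₁ => ?_⟩
    by_contra hcon
    push_neg at hcon
    have ht₂lt : t₂ < t₁ := by
      rcases eq_or_lt_of_le ht₁ with h | h
      · exfalso; rw [← h] at hcon; linarith
      · exact h
    set S : Set ℝ := {s ∈ Set.Icc t₂ t₁ | -ε ≤ d2 s} with hSdef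
    have hScomp : IsCompact S := by
      apply isCompact_Icc.of_isClosed_subset
      · exact (isClosed_Icc.inter (isClosed_le continuous_const h2c))
      · intro x hx; exact hx.1
    have hSne : S.Nonempty := ⟨t₂, ⟨le_rfl, le_of_lt ht₂lt⟩, ht₂⟩
    set s₀ := sSup S with hs₀def
    have hs₀mem : s₀ ∈ S := hScomp.sSup_mem hSne
    have hs₀lt : s₀ < t₁ := by
      rcases eq_or_lt_of_le hs₀mem.1.2 with h | h
      · exfalso; have := hs₀mem.2; rw [h] at this; linarith
      · exact h
    have hmono : StrictMonoOn d2 (Set.Icc s₀ t₁) := by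
      apply strictMonoOn_of_deriv_pos (convex_Icc s₀ t₁) h2c.continuousOn
      intro x hx
      rw [interior_Icc] at hx
      have hxT : T ≤ x := le_trans ht₂T (le_trans hs₀mem.1.1 (le_of_lt hx.1))
      have hxI : x ∈ Set.Icc t₂ t₁ :=
        ⟨le_trans hs₀mem.1.1 (le_of_lt hx.1), le_of_lt hx.2⟩
      have hxnot : x ∉ S := fun hmem => absurd (le_csSup hScomp.bddAbove hmem) (not_le.mpr hx.1)
      have hd2x : d2 x < -ε := by
        by_contra hh
        push_neg at hh
        exact hxnot ⟨hxI, hh⟩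
      exact hf3pos x hxT hd2x
    have := hmono (Set.left_mem_Icc.mpr (le_of_lt hs₀lt))
      (Set.right_mem_Icc.mpr (le_of_lt hs₀lt)) hs₀lt
    have := hs₀mem.2
    linarith
  -- d2 → 0
  have hd2lim : Tendsto d2 atTop (nhds 0) := by
    rw [NormedAddCommGroup.tendsto_nhds_zero]
    intro ε hε
    filter_upwards [hbar (ε/2) (by linarith), eventually_ge_atTop (0:ℝ)] with t h1 h2'
    rw [Real.norm_eq_abs, abs_lt]
    constructor
    · linarith
    · linarith [hd2neg t h2']
  -- Part 1
  have hpart1 : Tendsto (fun t => f t * d1 t) atTop (nhds (-(1 + γ * d1 0))) := by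
    have h1 : Tendsto (fun t => C - d2 t) atTop (nhds (C - 0)) :=
      tendsto_const_nhds.sub hd2lim
    rw [sub_zero] at h1
    have heq : (fun t => f t * d1 t) =ᶠ[atTop] (fun t => C - d2 t) := by
      filter_upwards [eventually_ge_atTop (0:ℝ)] with t ht
      have := hC t ht
      linarith
    have h2' : Tendsto (fun t => f t * d1 t) atTop (nhds C) := h1.congr' heq.symm
    have : C = -(1 + γ * d1 0) := by rw [hCdef]; ring
    rwa [this] at h2'
  refine ⟨hpart1, ?_⟩
  -- Part 2
  have hK : ∀ t ≥ (0:ℝ), f t ^ 2 = 2*C*t + (γ^2 + 2 * d1 0) - 2 * d1 t := by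
    have hg : Differentiable ℝ (fun t => f t ^ 2 / 2 + d1 t - C * t) := by
      apply Differentiable.sub
      · exact ((hfd.pow 2).div_const 2).add h1d
      · exact (differentiable_const C).mul differentiable_id
    have hgz : ∀ t > (0:ℝ), deriv (fun t => f t ^ 2 / 2 + d1 t - C * t) t = 0 := by
      intro t ht
      have hder : HasDerivAt (fun t => f t ^ 2 / 2 + d1 t - C * t)
          ((2 * f t ^ 1 * d1 t) / 2 + d2 t - C * 1) t :=
        ((((hfd t).hasDerivAt.pow 2).div_const 2).add (h1d t).hasDerivAt).sub
          ((hasDerivAt_id t).const_mul C)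
      rw [hder.deriv]
      have := hC t (le_of_lt ht)
      ring_nf
      nlinarith [this]
    have hcst := constOn_Ici hg hgz
    intro t ht
    have h := hcst t ht
    rw [h0] at h
    nlinarith [h]
  have hQ : Tendsto (fun t => f t ^ 2 / t) atTop (nhds (2*C)) := by
    have hrhs : Tendsto (fun t => 2*C + (γ^2 + 2 * d1 0) * t⁻¹ - 2 * (d1 t * t⁻¹))
        atTop (nhds (2*C + (γ^2 + 2 * d1 0) * 0 - 2 * (0 * 0))) := by
      apply Tendsto.sub
      · exact tendsto_const_nhds.add (tendsto_const_nhds.mul tendsto_inv_atTop_zero)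
      · exact tendsto_const_nhds.mul (hlim.mul tendsto_inv_atTop_zero)
    simp only [mul_zero, zero_mul, sub_zero, add_zero] at hrhs
    apply hrhs.congr'
    filter_upwards [eventually_gt_atTop (0:ℝ)] with t ht
    have hKt := hK t (le_of_lt ht)
    field_simp
    nlinarith [hKt]
  have hCnn : 0 ≤ 2*C := by
    apply ge_of_tendsto hQ
    filter_upwards [eventually_gt_atTop (0:ℝ)] with t ht
    positivity
  have hsq : Tendsto (fun t => Real.sqrt (f t ^ 2 / t)) atTop (nhds (Real.sqrt (2*C))) :=
    (Real.continuous_sqrt.tendsto (2*C)).comp hQ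
  have heq2 : (fun t => f t / Real.sqrt t) =ᶠ[atTop] (fun t => Real.sqrt (f t ^ 2 / t)) := by
    filter_upwards [eventually_gt_atTop (0:ℝ), hunb.eventually_ge_atTop 0] with t ht hft
    rw [Real.sqrt_div (by positivity) t, Real.sqrt_sq hft]
  have hfin : Tendsto (fun t => f t / Real.sqrt t) atTop (nhds (Real.sqrt (2*C))) :=
    hsq.congr' heq2.symm
  have : Real.sqrt (2*C) = Real.sqrt (-2 * (1 + γ * d1 0)) := by
    congr 1; rw [hCdef]; ring
  rwa [this] at hfin
end

section
/- Let m > -1 and let g be a solution of g''' + (m+2) g g'' - (2m+1)(g')² = 0 on [0,∞) with g(0) = 0, g''(0) = -1, g'(∞) = 0, such that 0 < g'(t) ≤ g'(0) and g(t) ≥ 0 for all t. Then g'(0) ≥ 1/(6(m+1))^{1/3}. -/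
theorem stmt_17 (m : ℝ) (hm : m > -1)
    (g : ℝ → ℝ) (hg : ContDiff ℝ 3 g)
    (hode : ∀ t ≥ (0:ℝ), iteratedDeriv 3 g t + (m + 2) * g t * iteratedDeriv 2 g t
      - (2 * m + 1) * (deriv g t) ^ 2 = 0)
    (h0 : g 0 = 0) (h2 : iteratedDeriv 2 g 0 = -1)
    (hlim : Filter.Tendsto (deriv g) Filter.atTop (nhds 0))
    (hincr : ∀ t ≥ (0:ℝ), 0 < deriv g t ∧ deriv g t ≤ deriv g 0)
    (hpos : ∀ t ≥ (0:ℝ), 0 ≤ g t) :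
    deriv g 0 ≥ (1 / (6 * (m + 1))) ^ ((1:ℝ)/3) := by
  set α := deriv g 0 with hαdef
  have hα0 : 0 < α := (hincr 0 le_rfl).1
  have hm1 : (0:ℝ) < m + 1 := by linarith
  -- smoothness
  have hgd : Differentiable ℝ g := hg.differentiable (by norm_num)
  have hg2 : ContDiff ℝ 2 (deriv g) := by
    have h : ContDiff ℝ (((2:ℕ):ℕ∞)+1) g := by exact_mod_cast hg
    rw [contDiff_succ_iff_deriv] at h
    exact_mod_cast h.2.2
  have hg1d : Differentiable ℝ (deriv g) := hg2.differentiable (by norm_num)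
  have hg1 : ContDiff ℝ 1 (deriv (deriv g)) := by
    have h : ContDiff ℝ (((1:ℕ):ℕ∞)+1) (deriv g) := by exact_mod_cast hg2
    rw [contDiff_succ_iff_deriv] at h
    exact_mod_cast h.2.2
  have hg2d : Differentiable ℝ (deriv (deriv g)) := hg1.differentiable (by norm_num)
  set f1 := deriv g with hf1
  set f2 := deriv (deriv g) with hf2
  set f3 := deriv (deriv (deriv g)) with hf3
  have hi2 : iteratedDeriv 2 g = f2 := by
    rw [show (2:ℕ) = 1+1 from rfl, iteratedDeriv_succ, iteratedDeriv_one]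
  have hi3 : iteratedDeriv 3 g = f3 := by
    rw [show (3:ℕ) = 2+1 from rfl, iteratedDeriv_succ, hi2]
  rw [hi2] at h2
  have hode' : ∀ t ≥ (0:ℝ), f3 t = (2*m+1) * (f1 t)^2 - (m+2) * g t * f2 t := by
    intro t ht
    have := hode t ht
    rw [hi2, hi3] at this
    linarith
  -- Step 1: ψ(t) = f2 t + (m+2) g f1 + t satisfies ψ(t) ≤ -1 + (3(m+1)α²+1) t on t ≥ 0
  set C := 3*(m+1)*α^2 + 1 with hC
  set h₁ : ℝ → ℝ := fun t => f2 t + (m+2) * g t * f1 t + t - C * t with hh₁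
  have hd₁ : ∀ t : ℝ, HasDerivAt h₁
      (f3 t + (m+2) * (f1 t * f1 t + g t * f2 t) + 1 - C) t := by
    intro t
    have H1 : HasDerivAt g (f1 t) t := (hgd t).hasDerivAt
    have H2 : HasDerivAt f1 (f2 t) t := (hg1d t).hasDerivAt
    have H3 : HasDerivAt f2 (f3 t) t := (hg2d t).hasDerivAt
    have Hmul : HasDerivAt (fun t => (m+2) * g t * f1 t)
        ((m+2) * (f1 t * f1 t + g t * f2 t)) t := by
      have := ((H1.const_mul (m+2)).mul H2)
      refine this.congr_deriv ?_
      ring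
    have Hid : HasDerivAt (fun t : ℝ => t) 1 t := hasDerivAt_id t
    have HC : HasDerivAt (fun t : ℝ => C * t) C t := by
      simpa using (hasDerivAt_id t).const_mul C
    exact ((H3.add Hmul).add Hid).sub HC
  have hstep1 : ∀ t ≥ (0:ℝ), f2 t + (m+2) * g t * f1 t + t ≤ -1 + C * t := by
    intro t ht
    have hanti : AntitoneOn h₁ (Set.Ici (0:ℝ)) := by
      apply antitoneOn_of_deriv_nonpos (convex_Ici 0)
      · exact (Continuous.continuousOn (by
          have : Continuous h₁ := by
            fun_prop (disch := intro t; exact (hd₁ t).differentiableAt)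
          exact this))
      · intro x hx
        exact ((hd₁ x).differentiableAt).differentiableWithinAt
      · intro x hx
        rw [interior_Ici] at hx
        rw [(hd₁ x).deriv]
        have hxo : (0:ℝ) ≤ x := le_of_lt hx
        rw [hode' x hxo]
        have h1 : 0 < f1 x := (hincr x hxo).1
        have h2' : f1 x ≤ α := (hincr x hxo).2
        have hsq : (f1 x)^2 ≤ α^2 := by nlinarith
        nlinarith [hsq]
    have := hanti (Set.self_mem_Ici) ht ht
    have hz : h₁ 0 = -1 := by simp [hh₁, h0, h2]
    rw [hz] at this
    simp only [hh₁] at this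
    linarith
  -- Step 2: h₂(t) = f1 t + t - (3(m+1)α²/2) t² - α ≤ 0 on t ≥ 0
  set K := 3*(m+1)*α^2 with hK
  set h₂ : ℝ → ℝ := fun t => f1 t + t - K/2 * t^2 - α with hh₂
  have hd₂ : ∀ t : ℝ, HasDerivAt h₂ (f2 t + 1 - K * t) t := by
    intro t
    have H2 : HasDerivAt f1 (f2 t) t := (hg1d t).hasDerivAt
    have Hid : HasDerivAt (fun t : ℝ => t) 1 t := hasDerivAt_id t
    have Hq : HasDerivAt (fun t : ℝ => K/2 * t^2) (K * t) t := by
      have : HasDerivAt (fun t : ℝ => t^2) (2*t) t := by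
        simpa using (hasDerivAt_pow 2 t)
      have := this.const_mul (K/2)
      refine this.congr_deriv ?_
      ring
    exact ((H2.add Hid).sub Hq).sub_const α
  have hstep2 : ∀ t ≥ (0:ℝ), h₂ t ≤ 0 := by
    intro t ht
    have hanti : AntitoneOn h₂ (Set.Ici (0:ℝ)) := by
      apply antitoneOn_of_deriv_nonpos (convex_Ici 0)
      · exact Continuous.continuousOn (by
          fun_prop (disch := intro t; exact (hd₂ t).differentiableAt))
      · intro x hx
        exact ((hd₂ x).differentiableAt).differentiableWithinAt
      · intro x hx
        rw [interior_Ici] at hx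
        rw [(hd₂ x).deriv]
        have hxo : (0:ℝ) ≤ x := le_of_lt hx
        have hs1 := hstep1 x hxo
        have h1 : 0 < f1 x := (hincr x hxo).1
        have hgx : 0 ≤ g x := hpos x hxo
        have hm2 : (0:ℝ) < m + 2 := by linarith
        have : 0 ≤ (m+2) * g x * f1 x := mul_nonneg (mul_nonneg hm2.le hgx) h1.le
        simp only [hC, hK] at *
        nlinarith
    have := hanti (Set.self_mem_Ici) ht ht
    have hz : h₂ 0 = 0 := by simp [hh₂, hαdef]
    linarith [hz ▸ this]
  -- evaluate at t₀ = 1/K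
  have hK0 : 0 < K := by positivity
  set t₀ := 1 / K with ht₀
  have ht₀0 : 0 < t₀ := by positivity
  have hf1pos : 0 < f1 t₀ := (hincr t₀ ht₀0.le).1
  have hb := hstep2 t₀ ht₀0.le
  simp only [hh₂] at hb
  have hKt : K * t₀ = 1 := by rw [ht₀, mul_one_div, div_self hK0.ne']
  have hkey : α > t₀ / 2 := by nlinarith [hKt, hf1pos, hb]
  -- so α - 1/(2K) > 0, i.e. 2Kα > 1, i.e. 6(m+1)α³ > 1
  have hcube : 1 / (6*(m+1)) ≤ α^3 := by
    rw [ht₀] at hkey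
    rw [div_le_iff₀ (by positivity)]
    have : 1 / K < 2 * α := by linarith
    rw [div_lt_iff₀ hK0] at this
    simp only [hK] at this
    nlinarith
  -- conclude via rpow
  have hc0 : (0:ℝ) < 1 / (6*(m+1)) := by positivity
  calc (1 / (6*(m+1))) ^ ((1:ℝ)/3) ≤ (α^3 : ℝ) ^ ((1:ℝ)/3) :=
        Real.rpow_le_rpow hc0.le hcube (by norm_num)
    _ = α := by
        rw [← Real.rpow_natCast α 3, ← Real.rpow_mul hα0.le]
        norm_num
end

section
/- Let m > -1/2 and let f be a concave solution on [0,∞) of f''' + (m+2) f f'' - (2m+1)(f')² = 0 with f(0) = -γ, f''(0) = -1 and f'(∞) = 0. Then such a concave solution is unique: if f₁ and f₂ are two solutions with f''ᵢ < 0 on [0,∞), then f₁ = f₂. -/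
set_option maxHeartbeats 1000000
open Filter Set Topology

lemma stmt18_basics {f : ℝ → ℝ} (hf : ContDiff ℝ 3 f) :
    Differentiable ℝ f ∧ (∀ t, HasDerivAt (deriv f) (iteratedDeriv 2 f t) t)
    ∧ (∀ t, HasDerivAt (iteratedDeriv 2 f) (iteratedDeriv 3 f t) t)
    ∧ Continuous (iteratedDeriv 3 f) := by
  have e2 : iteratedDeriv 2 f = deriv (deriv f) := by
    rw [show (2:ℕ) = 1+1 from rfl, iteratedDeriv_succ, iteratedDeriv_one]
  have e3 : iteratedDeriv 3 f = deriv (iteratedDeriv 2 f) := by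
    rw [show (3:ℕ) = 2+1 from rfl, iteratedDeriv_succ]
  have h1 : Differentiable ℝ (deriv f) := by
    have := hf.differentiable_iteratedDeriv 1 (by norm_num)
    rwa [iteratedDeriv_one] at this
  have h2 : Differentiable ℝ (iteratedDeriv 2 f) := hf.differentiable_iteratedDeriv 2 (by norm_num)
  refine ⟨hf.differentiable (by norm_num), fun t => ?_, fun t => ?_, hf.continuous_iteratedDeriv 3 (by norm_num)⟩
  · have := (h1 t).hasDerivAt
    rwa [show deriv (deriv f) t = iteratedDeriv 2 f t by rw [e2]] at this
  · have := (h2 t).hasDerivAt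
    rwa [show deriv (iteratedDeriv 2 f) t = iteratedDeriv 3 f t by rw [e3]] at this

lemma stmt18_pos {f : ℝ → ℝ} (hf : ContDiff ℝ 3 f)
    (hconc : ∀ t ≥ (0:ℝ), iteratedDeriv 2 f t < 0)
    (hlim : Tendsto (deriv f) atTop (nhds 0)) :
    ∀ t ≥ (0:ℝ), 0 < deriv f t := by
  obtain ⟨-, hd1, -, -⟩ := stmt18_basics hf
  have anti : StrictAntiOn (deriv f) (Ici 0) := by
    apply strictAntiOn_of_deriv_neg (convex_Ici 0)
      (fun t _ => ((hd1 t).continuousAt).continuousWithinAt)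
    intro x hx
    rw [interior_Ici] at hx
    rw [(hd1 x).deriv]
    exact hconc x (le_of_lt hx)
  intro t ht
  have h1 : (0:ℝ) ≤ deriv f (t+1) := by
    refine le_of_tendsto hlim ?_
    filter_upwards [eventually_ge_atTop (t+1)] with x hx
    rcases eq_or_lt_of_le hx with h | h
    · rw [h]
    · exact le_of_lt (anti (show t+1 ∈ Ici (0:ℝ) by simp only [mem_Ici]; linarith)
        (show x ∈ Ici (0:ℝ) by simp only [mem_Ici]; linarith) h)
  have h2 : deriv f (t+1) < deriv f t :=
    anti (show t ∈ Ici (0:ℝ) from ht)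
      (show t+1 ∈ Ici (0:ℝ) by simp only [mem_Ici]; linarith) (by linarith)
  linarith

lemma stmt18_key (m γ : ℝ) (hm : m > -1/2)
    (f₁ f₂ : ℝ → ℝ) (hf₁ : ContDiff ℝ 3 f₁) (hf₂ : ContDiff ℝ 3 f₂)
    (hode₁ : ∀ t ≥ (0:ℝ), iteratedDeriv 3 f₁ t + (m + 2) * f₁ t * iteratedDeriv 2 f₁ t
      - (2 * m + 1) * (deriv f₁ t) ^ 2 = 0)
    (hode₂ : ∀ t ≥ (0:ℝ), iteratedDeriv 3 f₂ t + (m + 2) * f₂ t * iteratedDeriv 2 f₂ t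
      - (2 * m + 1) * (deriv f₂ t) ^ 2 = 0)
    (h0₁ : f₁ 0 = -γ) (h0₂ : f₂ 0 = -γ)
    (h2₁ : iteratedDeriv 2 f₁ 0 = -1) (h2₂ : iteratedDeriv 2 f₂ 0 = -1)
    (hlim₁ : Filter.Tendsto (deriv f₁) Filter.atTop (nhds 0))
    (hlim₂ : Filter.Tendsto (deriv f₂) Filter.atTop (nhds 0))
    (hconc₁ : ∀ t ≥ (0:ℝ), iteratedDeriv 2 f₁ t < 0)
    (hconc₂ : ∀ t ≥ (0:ℝ), iteratedDeriv 2 f₂ t < 0)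
    (hgt : deriv f₂ 0 < deriv f₁ 0) : False := by
  obtain ⟨hdf₁, hd1₁, hd2₁, hc3₁⟩ := stmt18_basics hf₁
  obtain ⟨hdf₂, hd1₂, hd2₂, hc3₂⟩ := stmt18_basics hf₂
  have hpos₂ := stmt18_pos hf₂ hconc₂ hlim₂
  set g0 : ℝ → ℝ := fun t => f₁ t - f₂ t with hg0def
  set g1 : ℝ → ℝ := fun t => deriv f₁ t - deriv f₂ t with hg1def
  set g2 : ℝ → ℝ := fun t => iteratedDeriv 2 f₁ t - iteratedDeriv 2 f₂ t with hg2def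
  set g3 : ℝ → ℝ := fun t => iteratedDeriv 3 f₁ t - iteratedDeriv 3 f₂ t with hg3def
  have hd_g0 : ∀ t, HasDerivAt g0 (g1 t) t := fun t =>
    ((hdf₁ t).hasDerivAt).sub ((hdf₂ t).hasDerivAt)
  have hd_g1 : ∀ t, HasDerivAt g1 (g2 t) t := fun t => (hd1₁ t).sub (hd1₂ t)
  have hd_g2 : ∀ t, HasDerivAt g2 (g3 t) t := fun t => (hd2₁ t).sub (hd2₂ t)
  have hc_g3 : Continuous g3 := hc3₁.sub hc3₂
  have hode : ∀ t ≥ (0:ℝ), g3 t =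
      -(m+2) * (f₁ t * iteratedDeriv 2 f₁ t - f₂ t * iteratedDeriv 2 f₂ t)
        + (2*m+1) * ((deriv f₁ t)^2 - (deriv f₂ t)^2) := by
    intro t ht
    have h1 := hode₁ t ht
    have h2 := hode₂ t ht
    simp only [hg3def]
    ring_nf
    ring_nf at h1 h2
    linarith
  -- a generic strict monotonicity tool for g2
  have mono_g2 : ∀ a b : ℝ, (∀ x ∈ Icc a b, 0 < g3 x) → StrictMonoOn g2 (Icc a b) := by
    intro a b hpos
    apply strictMonoOn_of_deriv_pos (convex_Icc a b)
      (fun x _ => ((hd_g2 x).continuousAt).continuousWithinAt)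
    intro x hx
    rw [(hd_g2 x).deriv]
    rw [interior_Icc] at hx
    exact hpos x ⟨le_of_lt hx.1, le_of_lt hx.2⟩
  have hg1_0 : 0 < g1 0 := by simp only [hg1def]; linarith
  have hg3_0 : 0 < g3 0 := by
    have h := hode 0 le_rfl
    rw [h0₁, h0₂, h2₁, h2₂] at h
    have hu2 : 0 < deriv f₂ 0 := hpos₂ 0 le_rfl
    simp only [hg1def] at hg1_0
    nlinarith [mul_pos (show (0:ℝ) < 2*m+1 by linarith)
      (mul_pos (show (0:ℝ) < deriv f₁ 0 - deriv f₂ 0 by linarith)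
        (show (0:ℝ) < deriv f₁ 0 + deriv f₂ 0 by linarith))]
  -- positivity of g3 near 0 gives g2 > 0 on (0, ε]
  obtain ⟨ε, hε, hball⟩ := Metric.eventually_nhds_iff.mp (hc_g3.continuousAt.eventually_mem
    (isOpen_Ioi.mem_nhds (show g3 0 ∈ Ioi (0:ℝ) from hg3_0)))
  have hεmono : StrictMonoOn g2 (Icc 0 (ε/2)) := by
    apply mono_g2
    intro x hx
    have : dist x 0 < ε := by
      rw [Real.dist_eq, sub_zero, abs_of_nonneg hx.1]; linarith [hx.2]
    exact hball this
  have hg2_0 : g2 0 = 0 := by simp only [hg2def]; rw [h2₁, h2₂]; ring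
  have hsmall : ∀ x, 0 < x → x ≤ ε/2 → 0 < g2 x := by
    intro x hx1 hx2
    have := hεmono (show (0:ℝ) ∈ Icc 0 (ε/2) by constructor <;> linarith)
      (show x ∈ Icc 0 (ε/2) by constructor <;> linarith) hx1
    rw [hg2_0] at this; exact this
  -- claim : g2 > 0 on (0, ∞)
  have claim : ∀ t, 0 < t → 0 < g2 t := by
    by_contra hcon
    push_neg at hcon
    obtain ⟨tb, htb, htb2⟩ := hcon
    have htb3 : ε/2 < tb := by
      by_contra hle; push_neg at hle
      exact absurd (hsmall tb htb hle) (not_lt.mpr htb2)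
    set S : Set ℝ := {t | ε/2 ≤ t ∧ g2 t ≤ 0} with hSdef
    have hSne : S.Nonempty := ⟨tb, le_of_lt htb3, htb2⟩
    have hSbdd : BddBelow S := ⟨ε/2, fun x hx => hx.1⟩
    have hScl : IsClosed S := by
      have hcg2 : Continuous g2 := by
        have : Differentiable ℝ g2 := fun t => (hd_g2 t).differentiableAt
        exact this.continuous
      exact (isClosed_le continuous_const continuous_id).inter
        (isClosed_le hcg2 continuous_const)
    set t₀ := sInf S with ht₀def
    have ht₀S : t₀ ∈ S := hScl.csInf_mem hSne hSbdd
    have ht₀pos : 0 < t₀ := lt_of_lt_of_le (by linarith) ht₀S.1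
    have hbefore : ∀ x, 0 < x → x < t₀ → 0 < g2 x := by
      intro x hx1 hx2
      by_contra hle; push_neg at hle
      rcases le_or_gt x (ε/2) with h | h
      · exact absurd (hsmall x hx1 h) (not_lt.mpr hle)
      · exact absurd (csInf_le hSbdd (show x ∈ S from ⟨le_of_lt h, hle⟩)) (not_le.mpr hx2)
    have hg2t₀ : g2 t₀ = 0 := by
      refine le_antisymm ht₀S.2 ?_
      have htend : Tendsto g2 (nhdsWithin t₀ (Iio t₀)) (nhds (g2 t₀)) :=
        ((hd_g2 t₀).continuousAt.continuousWithinAt).tendsto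
      refine ge_of_tendsto htend ?_
      filter_upwards [Ioo_mem_nhdsLT_of_mem (show t₀ ∈ Ioc 0 t₀ from ⟨ht₀pos, le_rfl⟩)]
        with x hx
      exact le_of_lt (hbefore x hx.1 hx.2)
    -- g1 strictly increasing on [0, t₀]
    have hmono1 : StrictMonoOn g1 (Icc 0 t₀) := by
      apply strictMonoOn_of_deriv_pos (convex_Icc 0 t₀)
        (fun x _ => ((hd_g1 x).continuousAt).continuousWithinAt)
      intro x hx
      rw [(hd_g1 x).deriv]
      rw [interior_Icc] at hx
      exact hbefore x hx.1 hx.2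
    have hg1pos : ∀ x ∈ Icc (0:ℝ) t₀, 0 < g1 x := by
      intro x hx
      rcases eq_or_lt_of_le hx.1 with h | h
      · rw [← h]; exact hg1_0
      · have := hmono1 (show (0:ℝ) ∈ Icc 0 t₀ from ⟨le_rfl, le_of_lt ht₀pos⟩) hx h
        linarith
    -- g0 strictly increasing on [0, t₀], so g0 t₀ > 0
    have hmono0 : StrictMonoOn g0 (Icc 0 t₀) := by
      apply strictMonoOn_of_deriv_pos (convex_Icc 0 t₀)
        (fun x _ => ((hd_g0 x).continuousAt).continuousWithinAt)
      intro x hx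
      rw [(hd_g0 x).deriv, interior_Icc] at *
      exact hg1pos x ⟨le_of_lt hx.1, le_of_lt hx.2⟩
    have hg0t₀ : 0 < g0 t₀ := by
      have h00 : g0 0 = 0 := by simp only [hg0def]; rw [h0₁, h0₂]; ring
      have := hmono0 (show (0:ℝ) ∈ Icc 0 t₀ from ⟨le_rfl, le_of_lt ht₀pos⟩)
        (show t₀ ∈ Icc 0 t₀ from ⟨le_of_lt ht₀pos, le_rfl⟩) ht₀pos
      linarith
    -- g3 t₀ > 0
    have hg3t₀ : 0 < g3 t₀ := by
      have h := hode t₀ (le_of_lt ht₀pos)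
      have hA : iteratedDeriv 2 f₁ t₀ = iteratedDeriv 2 f₂ t₀ := by
        have : g2 t₀ = 0 := hg2t₀
        simp only [hg2def] at this; linarith
      have hAneg : iteratedDeriv 2 f₂ t₀ < 0 := hconc₂ t₀ (le_of_lt ht₀pos)
      have hu2 : 0 < deriv f₂ t₀ := hpos₂ t₀ (le_of_lt ht₀pos)
      have hu1 : deriv f₂ t₀ < deriv f₁ t₀ := by
        have := hg1pos t₀ ⟨le_of_lt ht₀pos, le_rfl⟩
        simp only [hg1def] at this; linarith
      have hg0' : 0 < f₁ t₀ - f₂ t₀ := hg0t₀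
      rw [h, hA]
      nlinarith [mul_pos (show (0:ℝ) < m + 2 by linarith)
          (mul_pos (show (0:ℝ) < -(iteratedDeriv 2 f₂ t₀) by linarith) hg0'),
        mul_pos (show (0:ℝ) < 2*m+1 by linarith)
          (mul_pos (show (0:ℝ) < deriv f₁ t₀ - deriv f₂ t₀ by linarith)
            (show (0:ℝ) < deriv f₁ t₀ + deriv f₂ t₀ by linarith))]
    -- contradiction: g2 increasing just before t₀ but g2 t₀ = 0 and g2 > 0 before
    obtain ⟨δ, hδ, hball'⟩ := Metric.eventually_nhds_iff.mp (hc_g3.continuousAt.eventually_mem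
      (isOpen_Ioi.mem_nhds (show g3 t₀ ∈ Ioi (0:ℝ) from hg3t₀)))
    set c := max (t₀ - δ/2) (t₀/2) with hcdef
    have hc1 : 0 < c := lt_max_of_lt_right (by linarith)
    have hc2 : c < t₀ := max_lt (by linarith) (by linarith)
    have hc3 : t₀ - c ≤ δ/2 := by
      have : t₀ - δ/2 ≤ c := le_max_left _ _
      linarith
    have hmonoc : StrictMonoOn g2 (Icc c t₀) := by
      apply mono_g2
      intro x hx
      apply hball'
      rw [Real.dist_eq, abs_lt]
      constructor
      · linarith [hx.1]
      · linarith [hx.2]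
    have hlt := hmonoc (show c ∈ Icc c t₀ from ⟨le_rfl, le_of_lt hc2⟩)
      (show t₀ ∈ Icc c t₀ from ⟨le_of_lt hc2, le_rfl⟩) hc2
    rw [hg2t₀] at hlt
    exact absurd (hbefore c hc1 hc2) (not_lt.mpr (le_of_lt hlt))
  -- now g1 is strictly increasing on [0,∞), contradicting g1 → 0
  have hmono1 : StrictMonoOn g1 (Ici 0) := by
    apply strictMonoOn_of_deriv_pos (convex_Ici 0)
      (fun x _ => ((hd_g1 x).continuousAt).continuousWithinAt)
    intro x hx
    rw [interior_Ici] at hx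
    rw [(hd_g1 x).deriv]
    exact claim x hx
  have hg1lim : Tendsto g1 atTop (nhds 0) := by
    have := hlim₁.sub hlim₂
    simpa using this
  have hle : g1 1 ≤ 0 := by
    refine ge_of_tendsto hg1lim ?_
    filter_upwards [eventually_ge_atTop (1:ℝ)] with x hx
    rcases eq_or_lt_of_le hx with h | h
    · rw [h]
    · exact le_of_lt (hmono1 (show (1:ℝ) ∈ Ici 0 by norm_num)
        (show x ∈ Ici (0:ℝ) by simp only [mem_Ici]; linarith) h)
  have h01 := hmono1 (show (0:ℝ) ∈ Ici 0 from Set.self_mem_Ici)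
    (show (1:ℝ) ∈ Ici 0 by norm_num) one_pos
  linarith

lemma stmt18_gronwall (m γ : ℝ) (hm : m > -1/2)
    (f₁ f₂ : ℝ → ℝ) (hf₁ : ContDiff ℝ 3 f₁) (hf₂ : ContDiff ℝ 3 f₂)
    (hode₁ : ∀ t ≥ (0:ℝ), iteratedDeriv 3 f₁ t + (m + 2) * f₁ t * iteratedDeriv 2 f₁ t
      - (2 * m + 1) * (deriv f₁ t) ^ 2 = 0)
    (hode₂ : ∀ t ≥ (0:ℝ), iteratedDeriv 3 f₂ t + (m + 2) * f₂ t * iteratedDeriv 2 f₂ t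
      - (2 * m + 1) * (deriv f₂ t) ^ 2 = 0)
    (h0₁ : f₁ 0 = -γ) (h0₂ : f₂ 0 = -γ)
    (h2₁ : iteratedDeriv 2 f₁ 0 = -1) (h2₂ : iteratedDeriv 2 f₂ 0 = -1)
    (heq : deriv f₁ 0 = deriv f₂ 0) :
    ∀ t ≥ (0:ℝ), f₁ t = f₂ t := by
  obtain ⟨hdf₁, hd1₁, hd2₁, hc3₁⟩ := stmt18_basics hf₁
  obtain ⟨hdf₂, hd1₂, hd2₂, hc3₂⟩ := stmt18_basics hf₂
  intro T hT
  set w : ℝ → ℝ × ℝ × ℝ := fun t => (f₁ t - f₂ t,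
    deriv f₁ t - deriv f₂ t, iteratedDeriv 2 f₁ t - iteratedDeriv 2 f₂ t) with hwdef
  set w' : ℝ → ℝ × ℝ × ℝ := fun t => (deriv f₁ t - deriv f₂ t,
    iteratedDeriv 2 f₁ t - iteratedDeriv 2 f₂ t,
    iteratedDeriv 3 f₁ t - iteratedDeriv 3 f₂ t) with hw'def
  have hdw : ∀ t, HasDerivAt w (w' t) t := fun t =>
    (HasDerivAt.prodMk ((hdf₁ t).hasDerivAt.sub (hdf₂ t).hasDerivAt)
      (HasDerivAt.prodMk ((hd1₁ t).sub (hd1₂ t)) ((hd2₁ t).sub (hd2₂ t))))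
  have hcontw : ContinuousOn w (Icc 0 T) :=
    (continuous_iff_continuousAt.mpr fun t => (hdw t).continuousAt).continuousOn
  -- a bound M for the coefficients on [0, T]
  have hdd1 : Differentiable ℝ (deriv f₁) := fun t => (hd1₁ t).differentiableAt
  have hdd2 : Differentiable ℝ (deriv f₂) := fun t => (hd1₂ t).differentiableAt
  have hdi2 : Differentiable ℝ (iteratedDeriv 2 f₂) := fun t => (hd2₂ t).differentiableAt
  have hcd1 : Continuous (deriv f₁) := hdd1.continuous
  have hcd2 : Continuous (deriv f₂) := hdd2.continuous
  have hci2 : Continuous (iteratedDeriv 2 f₂) := hdi2.continuous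
  set B : ℝ → ℝ := fun t => |f₁ t| + |deriv f₁ t| + |deriv f₂ t| + |iteratedDeriv 2 f₂ t|
    with hBdef
  have hcB : Continuous B :=
    ((hdf₁.continuous.abs.add hcd1.abs).add hcd2.abs).add hci2.abs
  obtain ⟨C, hC⟩ := (isCompact_Icc (a := (0:ℝ)) (b := T)).exists_bound_of_continuousOn
    hcB.continuousOn
  set C' : ℝ := |C| with hC'def
  have hC'0 : 0 ≤ C' := abs_nonneg C
  have hM : ∀ x ∈ Icc (0:ℝ) T, |f₁ x| ≤ C' ∧ |deriv f₁ x| ≤ C' ∧ |deriv f₂ x| ≤ C'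
      ∧ |iteratedDeriv 2 f₂ x| ≤ C' := by
    intro x hx
    have h := hC x hx
    rw [Real.norm_eq_abs] at h
    have hB2 : B x ≤ C' := le_trans (le_abs_self _) (le_trans h (le_abs_self C))
    have b1 := abs_nonneg (f₁ x)
    have b2 := abs_nonneg (deriv f₁ x)
    have b3 := abs_nonneg (deriv f₂ x)
    have b4 := abs_nonneg (iteratedDeriv 2 f₂ x)
    simp only [hBdef] at hB2
    exact ⟨by linarith, by linarith, by linarith, by linarith⟩
  set K : ℝ := (m+2)*C' + (m+2)*C' + (2*m+1)*(C'+C') + 1 with hKdef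
  have hK1 : 1 ≤ K := by nlinarith
  have hw0 : ‖w 0‖ ≤ 0 := by
    have : w 0 = 0 := by
      simp only [hwdef]
      rw [h0₁, h0₂, h2₁, h2₂, heq]
      norm_num [Prod.ext_iff]
    rw [this, norm_zero]
  have hbound : ∀ x ∈ Ico (0:ℝ) T, ‖w' x‖ ≤ K * ‖w x‖ + 0 := by
    intro x hx
    obtain ⟨b1, b2, b3, b4⟩ := hM x ⟨hx.1, le_of_lt hx.2⟩
    rw [add_zero]
    have e1 : ‖w x‖ = max |f₁ x - f₂ x| (max |deriv f₁ x - deriv f₂ x|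
        |iteratedDeriv 2 f₁ x - iteratedDeriv 2 f₂ x|) := by
      simp [hwdef, Prod.norm_def, Real.norm_eq_abs]
    have e2 : ‖w' x‖ = max |deriv f₁ x - deriv f₂ x| (max |iteratedDeriv 2 f₁ x -
        iteratedDeriv 2 f₂ x| |iteratedDeriv 3 f₁ x - iteratedDeriv 3 f₂ x|) := by
      simp [hw'def, Prod.norm_def, Real.norm_eq_abs]
    rw [e1, e2]
    set N : ℝ := max |f₁ x - f₂ x| (max |deriv f₁ x - deriv f₂ x|
      |iteratedDeriv 2 f₁ x - iteratedDeriv 2 f₂ x|) with hNdef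
    have hN0 : 0 ≤ N := le_trans (abs_nonneg _) (le_max_left _ _)
    have hΔ0 : |f₁ x - f₂ x| ≤ N := le_max_left _ _
    have hΔ1 : |deriv f₁ x - deriv f₂ x| ≤ N :=
      le_trans (le_max_left _ _) (le_max_right _ _)
    have hΔ2 : |iteratedDeriv 2 f₁ x - iteratedDeriv 2 f₂ x| ≤ N :=
      le_trans (le_max_right _ _) (le_max_right _ _)
    have h3 : iteratedDeriv 3 f₁ x - iteratedDeriv 3 f₂ x
        = (-(m+2) * f₁ x) * (iteratedDeriv 2 f₁ x - iteratedDeriv 2 f₂ x)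
          + (-(m+2) * iteratedDeriv 2 f₂ x) * (f₁ x - f₂ x)
          + ((2*m+1) * (deriv f₁ x + deriv f₂ x)) * (deriv f₁ x - deriv f₂ x) := by
      have e1' := hode₁ x hx.1
      have e2' := hode₂ x hx.1
      linear_combination e1' - e2'
    have ha : |(-(m+2)) * f₁ x| ≤ (m+2)*C' := by
      rw [abs_mul, abs_neg, abs_of_pos (show (0:ℝ) < m+2 by linarith)]
      exact mul_le_mul_of_nonneg_left b1 (by linarith)
    have hb : |(-(m+2)) * iteratedDeriv 2 f₂ x| ≤ (m+2)*C' := by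
      rw [abs_mul, abs_neg, abs_of_pos (show (0:ℝ) < m+2 by linarith)]
      exact mul_le_mul_of_nonneg_left b4 (by linarith)
    have hc : |(2*m+1) * (deriv f₁ x + deriv f₂ x)| ≤ (2*m+1)*(C'+C') := by
      rw [abs_mul, abs_of_pos (show (0:ℝ) < 2*m+1 by linarith)]
      refine mul_le_mul_of_nonneg_left ?_ (by linarith)
      exact le_trans (abs_add_le _ _) (add_le_add b2 b3)
    have habs3 : |iteratedDeriv 3 f₁ x - iteratedDeriv 3 f₂ x|
        ≤ ((m+2)*C')*N + ((m+2)*C')*N + ((2*m+1)*(C'+C'))*N := by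
      rw [h3]
      refine le_trans (abs_add_three _ _ _) ?_
      rw [show |(-(m+2) * f₁ x) * (iteratedDeriv 2 f₁ x - iteratedDeriv 2 f₂ x)|
          = |(-(m+2)) * f₁ x| * |iteratedDeriv 2 f₁ x - iteratedDeriv 2 f₂ x| from abs_mul _ _,
        show |(-(m+2) * iteratedDeriv 2 f₂ x) * (f₁ x - f₂ x)|
          = |(-(m+2)) * iteratedDeriv 2 f₂ x| * |f₁ x - f₂ x| from abs_mul _ _,
        show |((2*m+1) * (deriv f₁ x + deriv f₂ x)) * (deriv f₁ x - deriv f₂ x)|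
          = |(2*m+1) * (deriv f₁ x + deriv f₂ x)| * |deriv f₁ x - deriv f₂ x| from abs_mul _ _]
      refine add_le_add (add_le_add ?_ ?_) ?_
      · exact mul_le_mul ha hΔ2 (abs_nonneg _) (mul_nonneg (by linarith) hC'0)
      · exact mul_le_mul hb hΔ0 (abs_nonneg _) (mul_nonneg (by linarith) hC'0)
      · exact mul_le_mul hc hΔ1 (abs_nonneg _)
          (mul_nonneg (by linarith) (by linarith))
    refine max_le ?_ (max_le ?_ ?_)
    · exact le_trans hΔ1 (le_mul_of_one_le_left hN0 hK1)
    · exact le_trans hΔ2 (le_mul_of_one_le_left hN0 hK1)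
    · refine le_trans habs3 ?_
      nlinarith
  have key := norm_le_gronwallBound_of_norm_deriv_right_le (δ := 0) (K := K) (ε := 0)
    hcontw (fun x _ => (hdw x).hasDerivWithinAt) hw0 hbound
  have hT' := key T (right_mem_Icc.mpr hT)
  rw [gronwallBound_ε0_δ0] at hT'
  have hwT : w T = 0 := norm_le_zero_iff.mp hT'
  have hfst : f₁ T - f₂ T = 0 := by
    have h := congrArg Prod.fst hwT
    simpa using h
  linarith

theorem stmt_18 (m γ : ℝ) (hm : m > -1/2)
    (f₁ f₂ : ℝ → ℝ) (hf₁ : ContDiff ℝ 3 f₁) (hf₂ : ContDiff ℝ 3 f₂)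
    (hode₁ : ∀ t ≥ (0:ℝ), iteratedDeriv 3 f₁ t + (m + 2) * f₁ t * iteratedDeriv 2 f₁ t
      - (2 * m + 1) * (deriv f₁ t) ^ 2 = 0)
    (hode₂ : ∀ t ≥ (0:ℝ), iteratedDeriv 3 f₂ t + (m + 2) * f₂ t * iteratedDeriv 2 f₂ t
      - (2 * m + 1) * (deriv f₂ t) ^ 2 = 0)
    (h0₁ : f₁ 0 = -γ) (h0₂ : f₂ 0 = -γ)
    (h2₁ : iteratedDeriv 2 f₁ 0 = -1) (h2₂ : iteratedDeriv 2 f₂ 0 = -1)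
    (hlim₁ : Filter.Tendsto (deriv f₁) Filter.atTop (nhds 0))
    (hlim₂ : Filter.Tendsto (deriv f₂) Filter.atTop (nhds 0))
    (hconc₁ : ∀ t ≥ (0:ℝ), iteratedDeriv 2 f₁ t < 0)
    (hconc₂ : ∀ t ≥ (0:ℝ), iteratedDeriv 2 f₂ t < 0) :
    ∀ t ≥ (0:ℝ), f₁ t = f₂ t := by
  have heq : deriv f₁ 0 = deriv f₂ 0 := by
    rcases lt_trichotomy (deriv f₁ 0) (deriv f₂ 0) with h | h | h
    · exact (stmt18_key m γ hm f₂ f₁ hf₂ hf₁ hode₂ hode₁ h0₂ h0₁ h2₂ h2₁ hlim₂ hlim₁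
        hconc₂ hconc₁ h).elim
    · exact h
    · exact (stmt18_key m γ hm f₁ f₂ hf₁ hf₂ hode₁ hode₂ h0₁ h0₂ h2₁ h2₂ hlim₁ hlim₂
        hconc₁ hconc₂ h).elim
  exact stmt18_gronwall m γ hm f₁ f₂ hf₁ hf₂ hode₁ hode₂ h0₁ h0₂ h2₁ h2₂ heq
end

section
/- Let m > -1/2 and let f be a concave-convex solution of the boundary value problem on [0,∞) (f''' + (m+2)ff'' - (2m+1)(f')² = 0, f(0) = -γ, f''(0) = -1, f'(∞) = 0), with f''(t₀) = 0, f'' < 0 on [0,t₀), f'' > 0 on (t₀,∞), and f bounded with f > 0, f' < 0, on [t₀,∞). Then for all t ≥ t₀: -(m+2)/2 < f'(t)/f(t)² < 0 and 0 ≤ f''(t)/f(t)³ < -(m+2)·f'(t)/f(t)². -/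
theorem stmt_19 (m γ : ℝ) (hm : m > -1/2)
    (f : ℝ → ℝ) (hf : ContDiff ℝ 3 f)
    (hode : ∀ t ≥ (0:ℝ), iteratedDeriv 3 f t + (m + 2) * f t * iteratedDeriv 2 f t
      - (2 * m + 1) * (deriv f t) ^ 2 = 0)
    (h0 : f 0 = -γ) (h2 : iteratedDeriv 2 f 0 = -1)
    (hlim : Filter.Tendsto (deriv f) Filter.atTop (nhds 0))
    (t₀ : ℝ) (ht₀pos : 0 < t₀)
    (ht₀ : iteratedDeriv 2 f t₀ = 0)
    (hccv : ∀ t, 0 ≤ t → t < t₀ → iteratedDeriv 2 f t < 0)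
    (hcvx : ∀ t, t₀ < t → 0 < iteratedDeriv 2 f t)
    (hbdd : ∃ C : ℝ, ∀ t ≥ (0:ℝ), |f t| ≤ C)
    (hpos : ∀ t ≥ t₀, 0 < f t)
    (hdec : ∀ t ≥ t₀, deriv f t < 0) :
    ∀ t ≥ t₀,
      (-(m + 2) / 2 < deriv f t / (f t) ^ 2 ∧ deriv f t / (f t) ^ 2 < 0) ∧
      (0 ≤ iteratedDeriv 2 f t / (f t) ^ 3 ∧
        iteratedDeriv 2 f t / (f t) ^ 3 < -(m + 2) * (deriv f t / (f t) ^ 2)) := by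
  have hm2 : (0:ℝ) < m + 2 := by linarith
  have hm1 : (0:ℝ) < m + 1 := by linarith
  have df : Differentiable ℝ f := hf.differentiable (by norm_num)
  have c2 : ContDiff ℝ 2 (deriv f) := by
    rw [show (3:WithTop ℕ∞) = 2+1 from rfl] at hf
    exact (contDiff_succ_iff_deriv.mp hf).2.2
  have df1 : Differentiable ℝ (deriv f) := c2.differentiable (by norm_num)
  have c1 : ContDiff ℝ 1 (deriv (deriv f)) := by
    rw [show (2:WithTop ℕ∞) = 1+1 from rfl] at c2
    exact (contDiff_succ_iff_deriv.mp c2).2.2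
  have df2 : Differentiable ℝ (deriv (deriv f)) := c1.differentiable (by norm_num)
  have e2 : iteratedDeriv 2 f = deriv (deriv f) := by
    rw [show (2:ℕ) = 1+1 from rfl, iteratedDeriv_succ, iteratedDeriv_one]
  have e3 : iteratedDeriv 3 f = deriv (deriv (deriv f)) := by
    rw [show (3:ℕ) = 2+1 from rfl, iteratedDeriv_succ, e2]
  set g : ℝ → ℝ := fun t => deriv (deriv f) t + (m+2) * (f t * deriv f t) with hgdef
  have hode' : ∀ t, 0 ≤ t → deriv (deriv (deriv f)) t
      = (2*m+1)*(deriv f t)^2 - (m+2) * (f t * deriv (deriv f) t) := by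
    intro t ht
    have h := hode t ht
    rw [e2, e3] at h
    nlinarith [h]
  have hgd : ∀ t, 0 ≤ t → HasDerivAt g (3*(m+1)*(deriv f t)^2) t := by
    intro t ht
    have h1 : HasDerivAt (deriv (deriv f)) (deriv (deriv (deriv f)) t) t :=
      (df2 t).hasDerivAt
    have h2 : HasDerivAt (fun s => f s * deriv f s)
        (deriv f t * deriv f t + f t * deriv (deriv f) t) t :=
      (df t).hasDerivAt.mul (df1 t).hasDerivAt
    have h3 := h1.add (h2.const_mul (m+2))
    refine h3.congr_deriv ?_
    rw [hode' t ht]; ring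
  have hgcont : Continuous g :=
    df2.continuous.add (continuous_const.mul (df.continuous.mul df1.continuous))
  have hgmono : StrictMonoOn g (Set.Ici t₀) := by
    apply strictMonoOn_of_deriv_pos (convex_Ici t₀) hgcont.continuousOn
    intro x hx
    rw [interior_Ici] at hx
    have hx0 : (0:ℝ) ≤ x := (lt_trans ht₀pos hx).le
    rw [(hgd x hx0).deriv]
    have hd := hdec x (le_of_lt hx)
    nlinarith [mul_pos (neg_pos.mpr hd) (neg_pos.mpr hd)]
  -- g < 0 on [t₀, ∞)
  have hglt : ∀ t, t₀ ≤ t → g t < 0 := by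
    by_contra hcon
    push_neg at hcon
    obtain ⟨t₁, ht₁, hg1⟩ := hcon
    have hmem1 : t₁ ∈ Set.Ici t₀ := ht₁
    have hmem2 : t₁ + 1 ∈ Set.Ici t₀ := by simp only [Set.mem_Ici]; linarith
    obtain ⟨c, hc⟩ : ∃ c, c = g (t₁ + 1) := ⟨_, rfl⟩
    have hcpos : 0 < c := by
      rw [hc]
      exact lt_of_le_of_lt hg1 (hgmono hmem1 hmem2 (by linarith))
    obtain ⟨C, hC⟩ := hbdd
    have htend : Filter.Tendsto (fun t => (m+2) * (f t * deriv f t))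
        Filter.atTop (nhds 0) := by
      apply squeeze_zero_norm' (a := fun t => ((m+2)*C) * |deriv f t|)
      · filter_upwards [Filter.eventually_ge_atTop (0:ℝ)] with t ht
        have hCt := hC t ht
        have h1 : ‖(m+2) * (f t * deriv f t)‖ = (m+2) * (|f t| * |deriv f t|) := by
          rw [Real.norm_eq_abs, abs_mul, abs_mul, abs_of_pos hm2]
        rw [h1]
        have := abs_nonneg (deriv f t)
        nlinarith [mul_le_mul_of_nonneg_right hCt this]
      · have h := hlim.abs
        simp only [abs_zero] at h
        have := h.const_mul ((m+2)*C)
        simpa using this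
    have habs : Filter.Tendsto (fun t => |(m+2) * (f t * deriv f t)|)
        Filter.atTop (nhds 0) := by
      have := htend.abs; simpa using this
    have hev : ∀ᶠ t in Filter.atTop, |(m+2) * (f t * deriv f t)| < c/2 :=
      habs.eventually_lt_const (half_pos hcpos)
    obtain ⟨T0, hT0⟩ := Filter.eventually_atTop.mp hev
    set T := max T0 (t₁ + 1) with hT
    have hTt₀ : t₀ ≤ T := le_trans (by linarith) (le_max_right _ _)
    have hf2bd : ∀ t, T ≤ t → c/2 ≤ deriv (deriv f) t := by
      intro t ht
      have h1 : c ≤ g t := by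
        rw [hc]
        apply hgmono.monotoneOn hmem2 (Set.mem_Ici.mpr (le_trans hTt₀ ht))
        exact le_trans (le_max_right _ _) ht
      have h2 := hT0 t (le_trans (le_max_left _ _) ht)
      have h3 := abs_lt.mp h2
      simp only [hgdef] at h1
      linarith [h3.1, h3.2]
    have hphi : MonotoneOn (fun t => deriv f t - c/2 * t) (Set.Ici T) := by
      apply monotoneOn_of_deriv_nonneg (convex_Ici T)
      · exact (df1.continuous.sub (continuous_const.mul continuous_id)).continuousOn
      · exact (df1.sub ((differentiable_const _).mul differentiable_id)).differentiableOn
      · intro x hx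
        rw [interior_Ici] at hx
        have hd : HasDerivAt (fun t => deriv f t - c/2 * t)
            (deriv (deriv f) x - c/2) x := by
          have := (df1 x).hasDerivAt.sub ((hasDerivAt_id x).const_mul (c/2))
          exact this.congr_deriv (by ring)
        rw [hd.deriv]
        linarith [hf2bd x hx.le]
    have hfTneg : deriv f T < 0 := hdec T hTt₀
    obtain ⟨t₂, ht₂⟩ : ∃ x, x = T + 2*(1 - deriv f T)/c := ⟨_, rfl⟩
    have hstep : 0 ≤ 2*(1 - deriv f T)/c := div_nonneg (by nlinarith) hcpos.le
    have hT2 : T ≤ t₂ := by rw [ht₂]; linarith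
    have hmono := hphi (Set.mem_Ici.mpr le_rfl) (Set.mem_Ici.mpr hT2) hT2
    have hval : c/2 * (t₂ - T) = 1 - deriv f T := by
      rw [ht₂]
      field_simp
      ring
    have ht₂t₀ : t₀ ≤ t₂ := le_trans hTt₀ hT2
    have := hdec t₂ ht₂t₀
    simp only at hmono
    nlinarith [hmono, hval]
  -- H := f' + (m+2)/2 f² is strictly decreasing with nonneg limit
  set H : ℝ → ℝ := fun t => deriv f t + (m+2)/2 * (f t)^2 with hHdef
  have hHd : ∀ t, HasDerivAt H (g t) t := by
    intro t
    have h1 : HasDerivAt (deriv f) (deriv (deriv f) t) t := (df1 t).hasDerivAt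
    have h2 : HasDerivAt (fun s => (m+2)/2 * (f s)^2)
        ((m+2)/2 * (2 * f t ^ 1 * deriv f t)) t :=
      ((df t).hasDerivAt.pow 2).const_mul ((m+2)/2)
    have h3 := h1.add h2
    refine h3.congr_deriv ?_
    simp only [hgdef, pow_one]
    push_cast
    ring
  have hHcont : Continuous H := by
    apply df1.continuous.add
    exact continuous_const.mul (df.continuous.pow 2)
  have hHanti : StrictAntiOn H (Set.Ici t₀) := by
    apply strictAntiOn_of_deriv_neg (convex_Ici t₀) hHcont.continuousOn
    intro x hx
    rw [interior_Ici] at hx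
    rw [(hHd x).deriv]
    exact hglt x hx.le
  have hHnn : ∀ t, t₀ ≤ t → 0 ≤ H t := by
    intro t ht
    apply le_of_tendsto hlim
    filter_upwards [Filter.eventually_ge_atTop t] with s hs
    have hs0 : t₀ ≤ s := le_trans ht hs
    have h1 : H s ≤ H t :=
      hHanti.antitoneOn (Set.mem_Ici.mpr ht) (Set.mem_Ici.mpr hs0) hs
    have h2 : deriv f s ≤ H s := by
      simp only [hHdef]
      nlinarith [sq_nonneg (f s)]
    linarith
  have hHpos : ∀ t, t₀ ≤ t → 0 < H t := by
    intro t ht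
    have h1 : H (t+1) < H t :=
      hHanti (Set.mem_Ici.mpr ht) (Set.mem_Ici.mpr (by linarith)) (by linarith)
    exact lt_of_le_of_lt (hHnn (t+1) (by linarith)) h1
  -- conclusion
  intro t ht
  have hfpos := hpos t ht
  have hf1neg := hdec t ht
  have hf2nn : 0 ≤ iteratedDeriv 2 f t := by
    rcases eq_or_lt_of_le ht with h | h
    · rw [← h, ht₀]
    · exact (hcvx t h).le
  have hg := hglt t ht
  have hH := hHpos t ht
  have hsq : 0 < (f t)^2 := by positivity
  have hcb : 0 < (f t)^3 := by positivity
  refine ⟨⟨?_, ?_⟩, ?_, ?_⟩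
  · rw [lt_div_iff₀ hsq]
    simp only [hHdef] at hH
    nlinarith
  · exact div_neg_of_neg_of_pos hf1neg hsq
  · exact div_nonneg hf2nn hcb.le
  · have key : iteratedDeriv 2 f t < -(m+2) * (f t * deriv f t) := by
      rw [e2]
      simp only [hgdef] at hg
      linarith
    calc iteratedDeriv 2 f t / f t ^ 3
        < (-(m+2) * (f t * deriv f t)) / f t ^ 3 := by
          exact (div_lt_div_iff_of_pos_right hcb).mpr key
      _ = -(m + 2) * (deriv f t / f t ^ 2) := by
          field_simp
end
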